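/- arXiv:1302.4815 — 4 statements merged into one kernel-verified Lean document; each statement's English description precedes it below -/
import Mathlib

section
/- If 0 ≤ x ≤ 1/2 and s > 0, then 1 - (1-x)^s ≤ 2(1 - e^{-xs}). -/
theorem stmt1 (x s : ℝ) (hx0 : 0 ≤ x) (hx : x ≤ 1/2) (hs : 0 < s) :
    1 - (1 - x) ^ s ≤ 2 * (1 - Real.exp (-(x * s))) := by
  have h1 : Real.exp (-(2*x)) ≤ 1 - x := by
    have h2 : 1 + 2*x ≤ Real.exp (2*x) := by linarith [Real.add_one_le_exp (2*x)]
    rw [Real.exp_neg, inv_le_comm₀ (Real.exp_pos _) (by linarith : (0:ℝ) < 1 - x)]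
    calc (1 - x)⁻¹ ≤ 1 + 2*x := by
          rw [← one_div, div_le_iff₀ (by linarith : (0:ℝ) < 1 - x)]
          nlinarith
      _ ≤ Real.exp (2*x) := h2
  have h3 : Real.exp (-(2*x*s)) ≤ (1 - x) ^ s := by
    calc Real.exp (-(2*x*s)) = Real.exp (-(2*x)) ^ s := by
          rw [← Real.exp_mul]; ring_nf
      _ ≤ (1 - x) ^ s := Real.rpow_le_rpow (Real.exp_pos _).le h1 hs.le
  have hu : Real.exp (-(x*s)) ≤ 1 := Real.exp_le_one_iff.mpr (by nlinarith)
  have hup : 0 < Real.exp (-(x*s)) := Real.exp_pos _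
  have hsq : Real.exp (-(2*x*s)) = Real.exp (-(x*s)) * Real.exp (-(x*s)) := by
    rw [← Real.exp_add]; ring_nf
  nlinarith [Real.exp_pos (-(x*s))]
end

section
/- Let {X(t)} be a strictly stationary process with E X(0)⁴ < ∞ and E X(0) = 0, such that Cum(X(j), X(j+k₁), X(l), X(l+k₂)) = π₄ E[a^{k₁+k₂+2(l-j)}/(1-a⁴)] for all l ≥ j, k₁,k₂ ≥ 0, where a is a random variable in (-1,1) and π₄ > 0. Then with D(k) = X(k) - X(k+2), the fourth cumulant c_{j,l,k} = Cum(X(j), D(j+k), X(l), D(l+k)) equals π₄ E[a^{2k+2(l-j)}(1-a²)/(1+a²)], and Σ_{j,l=1}^{n} |c_{j,l,k}| ≤ C n for a constant C independent of n and k. -/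
set_option maxHeartbeats 2000000

open MeasureTheory

/-- Joint fourth cumulant of centered random variables. -/
noncomputable def cum4 {Ω : Type*} [MeasurableSpace Ω] (μ : Measure Ω)
    (X1 X2 X3 X4 : Ω → ℝ) : ℝ :=
  (∫ ω, X1 ω * X2 ω * X3 ω * X4 ω ∂μ)
    - (∫ ω, X1 ω * X2 ω ∂μ) * (∫ ω, X3 ω * X4 ω ∂μ)
    - (∫ ω, X1 ω * X3 ω ∂μ) * (∫ ω, X2 ω * X4 ω ∂μ)
    - (∫ ω, X1 ω * X4 ω ∂μ) * (∫ ω, X2 ω * X3 ω ∂μ)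

section Aux

variable {Ω : Type*} [MeasurableSpace Ω] {μ : Measure Ω} [IsProbabilityMeasure μ]

omit [IsProbabilityMeasure μ] in
lemma my_cum4_swap (X1 X2 X3 X4 : Ω → ℝ) :
    cum4 μ X1 X2 X3 X4 = cum4 μ X3 X4 X1 X2 := by
  unfold cum4
  rw [show (fun ω => X3 ω * X4 ω * X1 ω * X2 ω) = fun ω => X1 ω * X2 ω * X3 ω * X4 ω
    from by funext ω; ring]
  rw [show (fun ω => X3 ω * X1 ω) = fun ω => X1 ω * X3 ω from by funext ω; ring]
  rw [show (fun ω => X4 ω * X2 ω) = fun ω => X2 ω * X4 ω from by funext ω; ring]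
  rw [show (fun ω => X3 ω * X2 ω) = fun ω => X2 ω * X3 ω from by funext ω; ring]
  rw [show (fun ω => X4 ω * X1 ω) = fun ω => X1 ω * X4 ω from by funext ω; ring]
  ring

omit [IsProbabilityMeasure μ] in
lemma my_mul_memL2 {f g : Ω → ℝ} (hf : MemLp f 4 μ) (hg : MemLp g 4 μ) :
    MemLp (fun ω => f ω * g ω) 2 μ := by
  haveI : ENNReal.HolderTriple 4 4 2 := ⟨by
    rw [← two_mul, show (4:ENNReal) = 2*2 from by norm_num,
      ENNReal.mul_inv (by simp) (by simp), ← mul_assoc,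
      ENNReal.mul_inv_cancel (by norm_num) (by norm_num), one_mul]⟩
  have := hg.smul (φ := f) hf (p := 4) (q := 4) (r := 2)
  have heq : (f • g) = fun ω => f ω * g ω := by funext ω; simp [smul_eq_mul]
  rwa [heq] at this

lemma my_int_mul2 {f g : Ω → ℝ} (hf : MemLp f 4 μ) (hg : MemLp g 4 μ) :
    Integrable (fun ω => f ω * g ω) μ :=
  (my_mul_memL2 hf hg).integrable (by norm_num)

omit [IsProbabilityMeasure μ] in
lemma my_int_mul4 {f g h k : Ω → ℝ} (hf : MemLp f 4 μ) (hg : MemLp g 4 μ)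
    (hh : MemLp h 4 μ) (hk : MemLp k 4 μ) :
    Integrable (fun ω => f ω * g ω * h ω * k ω) μ := by
  have h1 : MemLp (fun ω => f ω * g ω) 2 μ := my_mul_memL2 hf hg
  have h2 : MemLp (fun ω => h ω * k ω) 2 μ := my_mul_memL2 hh hk
  haveI : ENNReal.HolderTriple 2 2 1 := ⟨by rw [ENNReal.inv_two_add_inv_two, inv_one]⟩
  have := h2.smul (φ := fun ω => f ω * g ω) h1 (p := 2) (q := 2) (r := 1)
  rw [memLp_one_iff_integrable] at this
  have heq : ((fun ω => f ω * g ω) • fun ω => h ω * k ω) =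
      fun ω => f ω * g ω * h ω * k ω := by
    funext ω; simp [smul_eq_mul]; ring
  rwa [heq] at this

lemma my_pair_sub_right {f g g' : Ω → ℝ} (hf : MemLp f 4 μ) (hg : MemLp g 4 μ)
    (hg' : MemLp g' 4 μ) :
    ∫ ω, f ω * (g ω - g' ω) ∂μ = (∫ ω, f ω * g ω ∂μ) - ∫ ω, f ω * g' ω ∂μ := by
  rw [show (fun ω => f ω * (g ω - g' ω)) = fun ω => f ω * g ω - f ω * g' ω
    from by funext ω; ring]
  exact integral_sub (my_int_mul2 hf hg) (my_int_mul2 hf hg')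

lemma my_pair_sub_left {f f' g : Ω → ℝ} (hf : MemLp f 4 μ) (hf' : MemLp f' 4 μ)
    (hg : MemLp g 4 μ) :
    ∫ ω, (f ω - f' ω) * g ω ∂μ = (∫ ω, f ω * g ω ∂μ) - ∫ ω, f' ω * g ω ∂μ := by
  rw [show (fun ω => (f ω - f' ω) * g ω) = fun ω => f ω * g ω - f' ω * g ω
    from by funext ω; ring]
  exact integral_sub (my_int_mul2 hf hg) (my_int_mul2 hf' hg)

lemma my_pair_sub_both {f f' g g' : Ω → ℝ} (hf : MemLp f 4 μ) (hf' : MemLp f' 4 μ)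
    (hg : MemLp g 4 μ) (hg' : MemLp g' 4 μ) :
    ∫ ω, (f ω - f' ω) * (g ω - g' ω) ∂μ =
      (∫ ω, f ω * g ω ∂μ) - (∫ ω, f ω * g' ω ∂μ)
        - (∫ ω, f' ω * g ω ∂μ) + ∫ ω, f' ω * g' ω ∂μ := by
  rw [show (fun ω => (f ω - f' ω) * (g ω - g' ω)) =
      fun ω => (f ω * g ω - f ω * g' ω) - (f' ω * g ω - f' ω * g' ω)
    from by funext ω; ring]
  have hAB : Integrable (fun ω => f ω * g ω - f ω * g' ω) μ :=
    (my_int_mul2 hf hg).sub (my_int_mul2 hf hg')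
  have hCD : Integrable (fun ω => f' ω * g ω - f' ω * g' ω) μ :=
    (my_int_mul2 hf' hg).sub (my_int_mul2 hf' hg')
  rw [integral_sub hAB hCD,
    integral_sub (my_int_mul2 hf hg) (my_int_mul2 hf hg'),
    integral_sub (my_int_mul2 hf' hg) (my_int_mul2 hf' hg')]
  ring

lemma my_cum4_sub_sub (X1 Y Y' X3 Z Z' : Ω → ℝ)
    (h1 : MemLp X1 4 μ) (hY : MemLp Y 4 μ) (hY' : MemLp Y' 4 μ)
    (h3 : MemLp X3 4 μ) (hZ : MemLp Z 4 μ) (hZ' : MemLp Z' 4 μ) :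
    cum4 μ X1 (fun ω => Y ω - Y' ω) X3 (fun ω => Z ω - Z' ω)
      = cum4 μ X1 Y X3 Z - cum4 μ X1 Y X3 Z' - cum4 μ X1 Y' X3 Z
        + cum4 μ X1 Y' X3 Z' := by
  simp only [cum4]
  have e4 : ∫ ω, X1 ω * (Y ω - Y' ω) * X3 ω * (Z ω - Z' ω) ∂μ =
      (∫ ω, X1 ω * Y ω * X3 ω * Z ω ∂μ) - (∫ ω, X1 ω * Y ω * X3 ω * Z' ω ∂μ)
        - (∫ ω, X1 ω * Y' ω * X3 ω * Z ω ∂μ)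
        + ∫ ω, X1 ω * Y' ω * X3 ω * Z' ω ∂μ := by
    rw [show (fun ω => X1 ω * (Y ω - Y' ω) * X3 ω * (Z ω - Z' ω)) =
        fun ω => (X1 ω * Y ω * X3 ω * Z ω - X1 ω * Y ω * X3 ω * Z' ω)
          - (X1 ω * Y' ω * X3 ω * Z ω - X1 ω * Y' ω * X3 ω * Z' ω)
      from by funext ω; ring]
    have hAB : Integrable
        (fun ω => X1 ω * Y ω * X3 ω * Z ω - X1 ω * Y ω * X3 ω * Z' ω) μ :=
      (my_int_mul4 h1 hY h3 hZ).sub (my_int_mul4 h1 hY h3 hZ')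
    have hCD : Integrable
        (fun ω => X1 ω * Y' ω * X3 ω * Z ω - X1 ω * Y' ω * X3 ω * Z' ω) μ :=
      (my_int_mul4 h1 hY' h3 hZ).sub (my_int_mul4 h1 hY' h3 hZ')
    rw [integral_sub hAB hCD,
      integral_sub (my_int_mul4 h1 hY h3 hZ) (my_int_mul4 h1 hY h3 hZ'),
      integral_sub (my_int_mul4 h1 hY' h3 hZ) (my_int_mul4 h1 hY' h3 hZ')]
    ring
  rw [e4, my_pair_sub_right h1 hY hY', my_pair_sub_right h3 hZ hZ',
    my_pair_sub_right h1 hZ hZ', my_pair_sub_both hY hY' hZ hZ',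
    my_pair_sub_left hY hY' h3]
  ring

end Aux

theorem stmt13 {Ω : Type*} [MeasurableSpace Ω] (μ : Measure Ω) [IsProbabilityMeasure μ]
    (X : ℕ → Ω → ℝ) (a : Ω → ℝ) (π4 : ℝ) (hπ4 : 0 < π4)
    (hstat : ∀ (n : ℕ) (t : ℕ),
      Measure.map (fun ω => fun i : Fin n => X (t + i) ω) μ =
        Measure.map (fun ω => fun i : Fin n => X i ω) μ)
    (hL4 : ∀ t, MemLp (X t) 4 μ)
    (hcent : ∀ t, ∫ ω, X t ω ∂μ = 0)
    (ha : ∀ᵐ ω ∂μ, |a ω| < 1)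
    (hinta : Integrable (fun ω => 1 / (1 - (a ω) ^ 4)) μ)
    (hcum : ∀ j l k1 k2 : ℕ, j ≤ l →
      cum4 μ (X j) (X (j + k1)) (X l) (X (l + k2)) =
        π4 * ∫ ω, (a ω) ^ (k1 + k2 + 2 * (l - j)) / (1 - (a ω) ^ 4) ∂μ) :
    (∀ j l k : ℕ, j ≤ l →
      cum4 μ (X j) (fun ω => X (j + k) ω - X (j + k + 2) ω)
            (X l) (fun ω => X (l + k) ω - X (l + k + 2) ω) =
        π4 * ∫ ω, (a ω) ^ (2 * k + 2 * (l - j)) * (1 - (a ω) ^ 2) / (1 + (a ω) ^ 2) ∂μ) ∧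
    ∃ C : ℝ, ∀ n k : ℕ,
      ∑ j ∈ Finset.Icc 1 n, ∑ l ∈ Finset.Icc 1 n,
        |cum4 μ (X j) (fun ω => X (j + k) ω - X (j + k + 2) ω)
              (X l) (fun ω => X (l + k) ω - X (l + k + 2) ω)| ≤ C * n := by
  -- measurable surrogate for a^2
  have hgm : AEMeasurable (fun ω => 1 / (1 - (a ω) ^ 4)) μ := hinta.aemeasurable
  set q : Ω → ℝ := fun ω => Real.sqrt (1 - (1 / (1 - (a ω) ^ 4))⁻¹) with hq_def
  have hqm : AEMeasurable q μ := by
    have hmeas : Measurable fun x : ℝ => Real.sqrt (1 - x⁻¹) :=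
      Real.continuous_sqrt.measurable.comp (measurable_const.sub measurable_inv)
    exact hmeas.comp_aemeasurable hgm
  have hqa : q =ᵐ[μ] fun ω => (a ω) ^ 2 := by
    filter_upwards [ha] with ω h
    have h2 : (a ω) ^ 2 < 1 := by nlinarith [sq_abs (a ω), abs_nonneg (a ω)]
    have h4 : (a ω) ^ 4 < 1 := by nlinarith [sq_nonneg (a ω)]
    have hpos : 0 < 1 - (a ω) ^ 4 := by linarith
    simp only [hq_def, one_div, inv_inv]
    rw [show 1 - (1 - (a ω) ^ 4) = ((a ω) ^ 2) ^ 2 from by ring]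
    exact Real.sqrt_sq (sq_nonneg _)
  -- integrability of a^(2s)/(1-a^4)
  have IntA : ∀ s : ℕ, Integrable (fun ω => (a ω) ^ (2 * s) / (1 - (a ω) ^ 4)) μ := by
    intro s
    have hsm : AEStronglyMeasurable (fun ω => (a ω) ^ (2 * s) / (1 - (a ω) ^ 4)) μ := by
      have h1 : AEMeasurable (fun ω => q ω ^ s * (1 / (1 - (a ω) ^ 4))) μ :=
        (hqm.pow_const s).mul hgm
      refine h1.aestronglyMeasurable.congr ?_
      filter_upwards [hqa] with ω h
      rw [h, pow_mul]
      ring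
    refine hinta.mono' hsm ?_
    filter_upwards [ha] with ω h
    have h2 : (a ω) ^ 2 < 1 := by nlinarith [sq_abs (a ω), abs_nonneg (a ω)]
    have hpos : 0 < 1 - (a ω) ^ 4 := by nlinarith [sq_nonneg (a ω)]
    rw [Real.norm_eq_abs, abs_div, abs_of_pos hpos, one_div]
    rw [div_eq_mul_inv]
    have habs : |(a ω) ^ (2 * s)| ≤ 1 := by
      rw [abs_pow]; exact pow_le_one₀ (abs_nonneg _) h.le
    have hinv : (0:ℝ) ≤ (1 - (a ω) ^ 4)⁻¹ := (inv_nonneg).2 hpos.le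
    nlinarith
  -- integrability of a^(2s)(1-a^2)/(1+a^2)
  have IntB : ∀ s : ℕ,
      Integrable (fun ω => (a ω) ^ (2 * s) * (1 - (a ω) ^ 2) / (1 + (a ω) ^ 2)) μ := by
    intro s
    have hsm : AEStronglyMeasurable
        (fun ω => (a ω) ^ (2 * s) * (1 - (a ω) ^ 2) / (1 + (a ω) ^ 2)) μ := by
      have h1 : AEMeasurable (fun ω => q ω ^ s * (1 - q ω) / (1 + q ω)) μ :=
        ((hqm.pow_const s).mul (aemeasurable_const.sub hqm)).div
          (aemeasurable_const.add hqm)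
      refine h1.aestronglyMeasurable.congr ?_
      filter_upwards [hqa] with ω h
      rw [h, pow_mul]
    refine (integrable_const (1:ℝ)).mono' hsm ?_
    filter_upwards [ha] with ω h
    have h2 : (a ω) ^ 2 < 1 := by nlinarith [sq_abs (a ω), abs_nonneg (a ω)]
    have hden : (0:ℝ) < 1 + (a ω) ^ 2 := by nlinarith [sq_nonneg (a ω)]
    rw [Real.norm_eq_abs, abs_div, abs_of_pos hden, abs_mul, abs_of_nonneg (by linarith : (0:ℝ) ≤ 1 - (a ω)^2)]
    have habs : |(a ω) ^ (2 * s)| ≤ 1 := by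
      rw [abs_pow]; exact pow_le_one₀ (abs_nonneg _) h.le
    rw [div_le_one hden]
    nlinarith [abs_nonneg ((a ω) ^ (2 * s))]
  -- integrability of (a^2)^d (1-a^2)
  have IntC : ∀ d : ℕ, Integrable (fun ω => ((a ω) ^ 2) ^ d * (1 - (a ω) ^ 2)) μ := by
    intro d
    have hsm : AEStronglyMeasurable (fun ω => ((a ω) ^ 2) ^ d * (1 - (a ω) ^ 2)) μ := by
      have h1 : AEMeasurable (fun ω => q ω ^ d * (1 - q ω)) μ :=
        (hqm.pow_const d).mul (aemeasurable_const.sub hqm)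
      refine h1.aestronglyMeasurable.congr ?_
      filter_upwards [hqa] with ω h
      rw [h]
    refine (integrable_const (1:ℝ)).mono' hsm ?_
    filter_upwards [ha] with ω h
    have h2 : (a ω) ^ 2 < 1 := by nlinarith [sq_abs (a ω), abs_nonneg (a ω)]
    rw [Real.norm_eq_abs, abs_mul, abs_of_nonneg (by linarith : (0:ℝ) ≤ 1 - (a ω)^2),
      abs_pow, abs_of_nonneg (sq_nonneg (a ω))]
    have habs : ((a ω) ^ 2) ^ d ≤ 1 := pow_le_one₀ (sq_nonneg _) h2.le
    nlinarith [pow_nonneg (sq_nonneg (a ω)) d]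
  -- part 1
  have key : ∀ j l k : ℕ, j ≤ l →
      cum4 μ (X j) (fun ω => X (j + k) ω - X (j + k + 2) ω)
            (X l) (fun ω => X (l + k) ω - X (l + k + 2) ω) =
        π4 * ∫ ω, (a ω) ^ (2 * k + 2 * (l - j)) * (1 - (a ω) ^ 2) / (1 + (a ω) ^ 2) ∂μ := by
    intro j l k hjl
    rw [my_cum4_sub_sub (X j) (X (j+k)) (X (j+k+2)) (X l) (X (l+k)) (X (l+k+2))
      (hL4 j) (hL4 (j+k)) (hL4 (j+k+2)) (hL4 l) (hL4 (l+k)) (hL4 (l+k+2))]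
    rw [show X (j+k+2) = X (j+(k+2)) from congrArg X (by omega),
      show X (l+k+2) = X (l+(k+2)) from congrArg X (by omega)]
    rw [hcum j l k k hjl, hcum j l k (k+2) hjl, hcum j l (k+2) k hjl,
      hcum j l (k+2) (k+2) hjl]
    rw [show k + k + 2*(l-j) = 2*(k+(l-j)) from by ring,
      show k + (k+2) + 2*(l-j) = 2*(k+(l-j)+1) from by ring,
      show k+2 + k + 2*(l-j) = 2*(k+(l-j)+1) from by ring,
      show k+2 + (k+2) + 2*(l-j) = 2*(k+(l-j)+2) from by ring,
      show 2*k + 2*(l-j) = 2*(k+(l-j)) from by ring]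
    set s := k + (l - j) with hs
    have h01 : Integrable (fun ω => (a ω)^(2*s)/(1-(a ω)^4) - (a ω)^(2*(s+1))/(1-(a ω)^4)) μ :=
      (IntA s).sub (IntA (s+1))
    have h011 : Integrable (fun ω =>
        ((a ω)^(2*s)/(1-(a ω)^4) - (a ω)^(2*(s+1))/(1-(a ω)^4)) - (a ω)^(2*(s+1))/(1-(a ω)^4)) μ :=
      h01.sub (IntA (s+1))
    have hcomb : (∫ ω, (a ω)^(2*s)/(1-(a ω)^4) ∂μ) - (∫ ω, (a ω)^(2*(s+1))/(1-(a ω)^4) ∂μ)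
        - (∫ ω, (a ω)^(2*(s+1))/(1-(a ω)^4) ∂μ) + (∫ ω, (a ω)^(2*(s+2))/(1-(a ω)^4) ∂μ)
        = ∫ ω, (a ω)^(2*s) * (1 - (a ω)^2) / (1 + (a ω)^2) ∂μ := by
      rw [← integral_sub (IntA s) (IntA (s+1)), ← integral_sub h01 (IntA (s+1)),
        ← integral_add h011 (IntA (s+2))]
      refine integral_congr_ae ?_
      filter_upwards [ha] with ω h
      have h2 : (a ω) ^ 2 < 1 := by nlinarith [sq_abs (a ω), abs_nonneg (a ω)]
      have hpos : (0:ℝ) < 1 - (a ω) ^ 4 := by nlinarith [sq_nonneg (a ω)]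
      have hden : (0:ℝ) < 1 + (a ω) ^ 2 := by nlinarith [sq_nonneg (a ω)]
      rw [show 2*(s+1) = 2*s + 2 from by ring, show 2*(s+2) = 2*s + 4 from by ring,
        pow_add, pow_add]
      field_simp
      ring
    rw [← hcomb]
    ring
  refine ⟨key, ?_⟩
  -- part 2
  set u : ℕ → ℝ := fun d => ∫ ω, ((a ω) ^ 2) ^ d * (1 - (a ω) ^ 2) ∂μ with hu_def
  have hu0 : ∀ d, 0 ≤ u d := by
    intro d
    refine integral_nonneg_of_ae ?_
    filter_upwards [ha] with ω h
    have h2 : (a ω) ^ 2 < 1 := by nlinarith [sq_abs (a ω), abs_nonneg (a ω)]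
    have := pow_nonneg (sq_nonneg (a ω)) d
    exact mul_nonneg this (by linarith)
  have husum : ∀ N : ℕ, ∑ d ∈ Finset.range N, u d ≤ 1 := by
    intro N
    have h1 : ∑ d ∈ Finset.range N, u d
        = ∫ ω, ∑ d ∈ Finset.range N, ((a ω) ^ 2) ^ d * (1 - (a ω) ^ 2) ∂μ :=
      (integral_finset_sum _ (fun d _ => IntC d)).symm
    rw [h1]
    have h2 : ∫ ω, ∑ d ∈ Finset.range N, ((a ω) ^ 2) ^ d * (1 - (a ω) ^ 2) ∂μ
        ≤ ∫ _, (1:ℝ) ∂μ := by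
      refine integral_mono_ae (integrable_finset_sum _ (fun d _ => IntC d))
        (integrable_const 1) ?_
      filter_upwards [ha] with ω h
      have hgeom := geom_sum_mul ((a ω) ^ 2) N
      have hsum : ∑ d ∈ Finset.range N, ((a ω) ^ 2) ^ d * (1 - (a ω) ^ 2)
          = (∑ d ∈ Finset.range N, ((a ω) ^ 2) ^ d) * (1 - (a ω) ^ 2) := by
        rw [Finset.sum_mul]
      rw [hsum]
      nlinarith [pow_nonneg (sq_nonneg (a ω)) N]
    simpa using h2
  -- bound on individual cumulants
  have hbd : ∀ j l k : ℕ, j ≤ l →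
      |cum4 μ (X j) (fun ω => X (j + k) ω - X (j + k + 2) ω)
            (X l) (fun ω => X (l + k) ω - X (l + k + 2) ω)| ≤ π4 * u (l - j) := by
    intro j l k hjl
    rw [key j l k hjl, abs_mul, abs_of_pos hπ4]
    refine mul_le_mul_of_nonneg_left ?_ hπ4.le
    set d := l - j with hd
    calc |∫ ω, (a ω) ^ (2*k + 2*d) * (1 - (a ω)^2) / (1 + (a ω)^2) ∂μ|
        ≤ ∫ ω, ‖(a ω) ^ (2*k + 2*d) * (1 - (a ω)^2) / (1 + (a ω)^2)‖ ∂μ :=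
          by rw [← Real.norm_eq_abs]; exact norm_integral_le_integral_norm _
      _ ≤ ∫ ω, ((a ω) ^ 2) ^ d * (1 - (a ω) ^ 2) ∂μ := by
          refine integral_mono_ae ?_ (IntC d) ?_
          · have := (IntB (k + d))
            rw [show 2*(k+d) = 2*k + 2*d from by ring] at this
            exact this.norm
          filter_upwards [ha] with ω h
          have h2 : (a ω) ^ 2 < 1 := by nlinarith [sq_abs (a ω), abs_nonneg (a ω)]
          have hden : (0:ℝ) < 1 + (a ω) ^ 2 := by nlinarith [sq_nonneg (a ω)]
          have h1ma : (0:ℝ) ≤ 1 - (a ω)^2 := by linarith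
          rw [Real.norm_eq_abs, abs_div, abs_of_pos hden, abs_mul,
            abs_of_nonneg h1ma, abs_pow]
          have step1 : |a ω| ^ (2*k + 2*d) * (1 - (a ω)^2) / (1 + (a ω)^2)
              ≤ |a ω| ^ (2*k + 2*d) * (1 - (a ω)^2) := by
            refine div_le_self (by positivity) (by nlinarith [sq_nonneg (a ω)])
          refine step1.trans ?_
          have step2 : |a ω| ^ (2*k + 2*d) ≤ |a ω| ^ (2*d) := by
            rw [show 2*k + 2*d = 2*d + 2*k from by ring, pow_add]
            have := pow_le_one₀ (abs_nonneg (a ω)) h.le (n := 2*k)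
            nlinarith [pow_nonneg (abs_nonneg (a ω)) (2*d)]
          have : |a ω| ^ (2*d) = ((a ω)^2)^d := by
            rw [pow_mul, sq_abs]
          nlinarith [pow_nonneg (abs_nonneg (a ω)) (2*d), step2]
      _ = u d := rfl
  refine ⟨2 * π4, ?_⟩
  intro n k
  have hrow : ∀ j ∈ Finset.Icc 1 n,
      ∑ l ∈ Finset.Icc 1 n,
        |cum4 μ (X j) (fun ω => X (j + k) ω - X (j + k + 2) ω)
              (X l) (fun ω => X (l + k) ω - X (l + k + 2) ω)| ≤ 2 * π4 := by
    intro j hj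
    rw [Finset.mem_Icc] at hj
    have hterm : ∀ l ∈ Finset.Icc 1 n,
        |cum4 μ (X j) (fun ω => X (j + k) ω - X (j + k + 2) ω)
              (X l) (fun ω => X (l + k) ω - X (l + k + 2) ω)|
          ≤ π4 * u (if j ≤ l then l - j else j - l) := by
      intro l hl
      by_cases hle : j ≤ l
      · simpa [hle] using hbd j l k hle
      · have hle' : l ≤ j := by omega
        rw [if_neg hle, my_cum4_swap]
        exact hbd l j k hle'
    refine le_trans (Finset.sum_le_sum hterm) ?_
    rw [← Finset.mul_sum]
    have hsplit : ∑ l ∈ Finset.Icc 1 n, u (if j ≤ l then l - j else j - l)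
        = (∑ l ∈ (Finset.Icc 1 n).filter (fun l => j ≤ l), u (l - j))
          + ∑ l ∈ (Finset.Icc 1 n).filter (fun l => ¬ j ≤ l), u (j - l) := by
      rw [← Finset.sum_filter_add_sum_filter_not (Finset.Icc 1 n) (fun l => j ≤ l)]
      congr 1
      · refine Finset.sum_congr rfl fun l hl => ?_
        rw [Finset.mem_filter] at hl
        rw [if_pos hl.2]
      · refine Finset.sum_congr rfl fun l hl => ?_
        rw [Finset.mem_filter] at hl
        rw [if_neg hl.2]
    rw [hsplit]
    have hb1 : (∑ l ∈ (Finset.Icc 1 n).filter (fun l => j ≤ l), u (l - j)) ≤ 1 := by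
      have himg : ∑ l ∈ (Finset.Icc 1 n).filter (fun l => j ≤ l), u (l - j)
          = ∑ d ∈ ((Finset.Icc 1 n).filter (fun l => j ≤ l)).image (fun l => l - j), u d :=
        (Finset.sum_image (fun x hx y hy hxy => by
          rw [Finset.mem_coe, Finset.mem_filter, Finset.mem_Icc] at hx hy; omega)).symm
      rw [himg]
      refine le_trans (Finset.sum_le_sum_of_subset_of_nonneg ?_
        (fun d _ _ => hu0 d)) (husum n)
      intro d hd
      rw [Finset.mem_image] at hd
      obtain ⟨l, hl, rfl⟩ := hd
      rw [Finset.mem_filter, Finset.mem_Icc] at hl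
      rw [Finset.mem_range]
      omega
    have hb2 : (∑ l ∈ (Finset.Icc 1 n).filter (fun l => ¬ j ≤ l), u (j - l)) ≤ 1 := by
      have himg : ∑ l ∈ (Finset.Icc 1 n).filter (fun l => ¬ j ≤ l), u (j - l)
          = ∑ d ∈ ((Finset.Icc 1 n).filter (fun l => ¬ j ≤ l)).image (fun l => j - l), u d :=
        (Finset.sum_image (fun x hx y hy hxy => by
          rw [Finset.mem_coe, Finset.mem_filter, Finset.mem_Icc] at hx hy; omega)).symm
      rw [himg]
      refine le_trans (Finset.sum_le_sum_of_subset_of_nonneg ?_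
        (fun d _ _ => hu0 d)) (husum n)
      intro d hd
      rw [Finset.mem_image] at hd
      obtain ⟨l, hl, rfl⟩ := hd
      rw [Finset.mem_filter, Finset.mem_Icc] at hl
      rw [Finset.mem_range]
      omega
    nlinarith
  refine le_trans (Finset.sum_le_sum hrow) ?_
  rw [Finset.sum_const, Nat.card_Icc]
  simp only [nsmul_eq_mul]
  have : ((n + 1 - 1 : ℕ) : ℝ) = (n : ℝ) := by norm_num
  rw [this]
  ring_nf
  exact le_refl _
end

section
/- Let r(t) = σ² E[a^t/(1-a²)] for t ∈ ℕ, where a is a random variable with values in [0,1) whose density φ satisfies φ(x) ~ C(1-x)^β as x → 1 with 0 < β < 1, and E[(1-a²)^{-1}] < ∞. Then r(t) ~ C₁ t^{-β} as t → ∞ for some constant C₁ > 0; in particular Σ_{t∈ℤ} |r(t)| = ∞. -/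
open MeasureTheory Set Filter

lemma gammaLim {β : ℝ} (hβ0 : 0 < β) :
    Tendsto (fun n : ℕ => (n:ℝ)^β * ∫ x in (0:ℝ)..1, x^n * (1-x)^(β-1)) atTop
      (nhds (Real.Gamma β)) := by
  have key : ∀ n : ℕ, ((( (n:ℝ)^β * ∫ x in (0:ℝ)..1, x^n * (1-x)^(β-1) : ℝ)) : ℂ)
      = Complex.GammaSeq (β:ℂ) n := by
    intro n
    rw [Complex.GammaSeq_eq_betaIntegral_of_re_pos (by simpa using hβ0) n,
      Complex.betaIntegral_symm]
    rw [Complex.betaIntegral]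
    push_cast
    rw [Complex.ofReal_cpow n.cast_nonneg]
    norm_cast
    congr 1
    rw [← intervalIntegral.integral_ofReal]
    refine intervalIntegral.integral_congr fun x hx => ?_
    rw [uIcc_of_le (by norm_num : (0:ℝ) ≤ 1)] at hx
    rw [← Complex.ofReal_cpow (by linarith [hx.2] : (0:ℝ) ≤ 1 - x)]
    rw [show Int.subNatNat (n + 1) 1 = (n : ℤ) by simp [Int.subNatNat], zpow_natCast]
    push_cast
    ring
  have h := Complex.GammaSeq_tendsto_Gamma (β:ℂ)
  have h2 : Tendsto (fun n : ℕ => (Complex.GammaSeq (β:ℂ) n).re) atTop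
      (nhds ((Complex.Gamma (β:ℂ)).re)) := (Complex.continuous_re.tendsto _).comp h
  rw [Complex.Gamma_ofReal] at h2
  simpa using h2.congr fun n => by rw [← key]; simp

lemma intInt {β : ℝ} (hβ0 : 0 < β) (n : ℕ) :
    IntegrableOn (fun x => x^n * (1-x)^(β-1)) (Ioo (0:ℝ) 1) volume := by
  have h1 : IntervalIntegrable (fun x : ℝ => x ^ (β-1)) volume 0 1 :=
    intervalIntegral.intervalIntegrable_rpow' (by linarith)
  have h2 : IntervalIntegrable (fun x : ℝ => (1-x) ^ (β-1)) volume 0 1 := by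
    have := (h1.comp_sub_left 1)
    norm_num at this
    exact this.symm
  have h3 : IntervalIntegrable (fun x : ℝ => x^n * (1-x)^(β-1)) volume 0 1 := by
    apply h2.continuousOn_mul (by fun_prop)
  rw [intervalIntegrable_iff_integrableOn_Ioo_of_le (by norm_num : (0:ℝ) ≤ 1)] at h3
  exact h3

lemma gammaLim' {β : ℝ} (hβ0 : 0 < β) :
    Tendsto (fun n : ℕ => (n:ℝ)^β * ∫ x in Ioo (0:ℝ) 1, x^n * (1-x)^(β-1)) atTop
      (nhds (Real.Gamma β)) := by
  refine (gammaLim hβ0).congr fun n => ?_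
  rw [intervalIntegral.integral_of_le (by norm_num : (0:ℝ) ≤ 1),
    integral_Ioc_eq_integral_Ioo]

lemma rpowGeom {β c : ℝ} (hβ : β ≤ 1) (hc0 : 0 ≤ c) (hc1 : c < 1) :
    Tendsto (fun n : ℕ => (n:ℝ)^β * c^n) atTop (nhds 0) := by
  have h := tendsto_pow_const_mul_const_pow_of_abs_lt_one 1 (by rw [abs_of_nonneg hc0]; exact hc1)
  refine squeeze_zero' ?_ ?_ h
  · filter_upwards with n
    positivity
  · filter_upwards [eventually_ge_atTop 1] with n hn
    have h1 : (n:ℝ)^β ≤ (n:ℝ)^(1:ℝ) :=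
      Real.rpow_le_rpow_of_exponent_le (by exact_mod_cast hn) hβ
    rw [Real.rpow_one] at h1
    have : (0:ℝ) ≤ c^n := by positivity
    calc (n:ℝ)^β * c^n ≤ (n:ℝ) * c^n := by nlinarith
    _ = (n:ℝ)^(1:ℕ) * c^n := by norm_num

lemma JSlim {β c : ℝ} (hβ0 : 0 < β) (hβ1 : β < 1) (hc0 : 0 ≤ c) (hc1 : c < 1) :
    Tendsto (fun n : ℕ => (n:ℝ)^β * ∫ x in Ioo c 1, x^n * (1-x)^(β-1)) atTop
      (nhds (Real.Gamma β)) := by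
  have hKint : IntegrableOn (fun x : ℝ => (1-x)^(β-1)) (Ioc 0 c) volume := by
    have := (intInt hβ0 0).mono_set (Ioc_subset_Ioo_right hc1)
    simpa using this
  set K := ∫ x in Ioc (0:ℝ) c, (1-x)^(β-1) with hK
  have hKnn : 0 ≤ K := setIntegral_nonneg measurableSet_Ioc fun x hx => by
    have h : 0 < 1 - x := by linarith [lt_of_le_of_lt hx.2 hc1]
    positivity
  have hsplit : ∀ n : ℕ, (∫ x in Ioo (0:ℝ) 1, x^n * (1-x)^(β-1))
      = (∫ x in Ioc (0:ℝ) c, x^n * (1-x)^(β-1)) + ∫ x in Ioo c 1, x^n * (1-x)^(β-1) := by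
    intro n
    have hdisj : Disjoint (Ioc (0:ℝ) c) (Ioo c 1) := by
      rw [Set.disjoint_left]
      rintro x hx1 hx2
      exact absurd hx1.2 (not_le.2 hx2.1)
    rw [← Ioc_union_Ioo_eq_Ioo hc0 hc1,
      setIntegral_union hdisj measurableSet_Ioo
        ((intInt hβ0 n).mono_set (Ioc_subset_Ioo_right hc1))
        ((intInt hβ0 n).mono_set (Ioo_subset_Ioo_left hc0))]
  have hterm : Tendsto (fun n : ℕ => (n:ℝ)^β * ∫ x in Ioc (0:ℝ) c, x^n * (1-x)^(β-1))
      atTop (nhds 0) := by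
    have hb : ∀ n : ℕ, (∫ x in Ioc (0:ℝ) c, x^n * (1-x)^(β-1)) ≤ c^n * K := by
      intro n
      rw [hK, ← integral_const_mul]
      refine setIntegral_mono_on ((intInt hβ0 n).mono_set (Ioc_subset_Ioo_right hc1))
        (hKint.const_mul _) measurableSet_Ioc fun x hx => ?_
      have h1 : (0:ℝ) ≤ (1-x)^(β-1) := by
        have h : 0 < 1 - x := by linarith [lt_of_le_of_lt hx.2 hc1]
        positivity
      have h2 : x^n ≤ c^n := pow_le_pow_left₀ hx.1.le hx.2 n
      nlinarith
    have hnn : ∀ n : ℕ, 0 ≤ ∫ x in Ioc (0:ℝ) c, x^n * (1-x)^(β-1) := by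
      intro n
      refine setIntegral_nonneg measurableSet_Ioc fun x hx => ?_
      have h0 : 0 ≤ x := hx.1.le
      have h : 0 < 1 - x := by linarith [lt_of_le_of_lt hx.2 hc1]
      positivity
    have hlim : Tendsto (fun n : ℕ => ((n:ℝ)^β * c^n) * K) atTop (nhds 0) := by
      simpa using (rpowGeom hβ1.le hc0 hc1).mul_const K
    refine squeeze_zero' ?_ ?_ hlim
    · filter_upwards with n
      have := hnn n
      positivity
    · filter_upwards with n
      have := hb n
      have hrn : (0:ℝ) ≤ (n:ℝ)^β := by positivity
      nlinarith [hnn n]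
  have := (gammaLim' hβ0).sub hterm
  rw [sub_zero] at this
  refine this.congr fun n => ?_
  rw [hsplit n]
  ring

set_option maxHeartbeats 1000000 in
lemma core {ν : Measure ℝ} {φ : ℝ → ℝ} {β C : ℝ} (hβ0 : 0 < β) (hβ1 : β < 1) (hC : 0 < C)
    (hdens : ν = (volume.restrict (Ico (0:ℝ) 1)).withDensity (fun x => ENNReal.ofReal (φ x)))
    (hreg : Tendsto (fun x => φ x / (1 - x) ^ β) (nhdsWithin 1 (Iio 1)) (nhds C))
    (hmom : Integrable (fun x => 1 / (1 - x^2)) ν) :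
    Tendsto (fun t : ℕ => (∫ x, x^t/(1-x^2) ∂ν) * (t:ℝ)^β) atTop
      (nhds (C/2 * Real.Gamma β)) := by
  classical
  -- a.e. support
  have hae : ∀ᵐ x ∂ν, x ∈ Ico (0:ℝ) 1 := by
    have habs : ν ≪ volume.restrict (Ico (0:ℝ) 1) := by
      rw [hdens]; exact withDensity_absolutelyContinuous _ _
    have h0 : (volume.restrict (Ico (0:ℝ) 1)) (Ico (0:ℝ) 1)ᶜ = 0 := by
      rw [Measure.restrict_apply measurableSet_Ico.compl]
      simp
    have h1 := habs h0
    rw [ae_iff]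
    exact h1
  have hsq : ∀ x : ℝ, x ∈ Ico (0:ℝ) 1 → 0 < 1 - x^2 := by
    intro x hx; nlinarith [hx.1, hx.2]
  have hfm : ∀ t : ℕ, Measurable fun x : ℝ => x^t/(1-x^2) := by
    intro t; fun_prop
  have hint : ∀ t : ℕ, Integrable (fun x : ℝ => x^t/(1-x^2)) ν := by
    intro t
    refine hmom.mono' (hfm t).aestronglyMeasurable (hae.mono fun x hx => ?_)
    have h1 := hsq x hx
    have h2 : x^t ≤ 1 := pow_le_one₀ hx.1 hx.2.le
    have h3 : (0:ℝ) ≤ x^t := pow_nonneg hx.1 t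
    rw [Real.norm_eq_abs, abs_of_nonneg (by positivity)]
    rw [div_le_div_iff₀ h1 h1]
    nlinarith
  have hnn : ∀ t : ℕ, 0 ≤ᵐ[ν] fun x : ℝ => x^t/(1-x^2) := by
    intro t
    refine hae.mono fun x hx => ?_
    have h1 := hsq x hx
    have h3 : (0:ℝ) ≤ x^t := pow_nonneg hx.1 t
    positivity
  set M := ∫ x, 1/(1-x^2) ∂ν with hMdef
  have hM0 : 0 ≤ M := integral_nonneg_of_ae (hae.mono fun x hx => by
    have := hsq x hx; positivity)
  have hΓ : 0 < Real.Gamma β := Real.Gamma_pos_of_pos hβ0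
  -- q-function limit
  have hq : Tendsto (fun x => φ x / ((1-x)^β * (1+x))) (nhdsWithin 1 (Iio 1)) (nhds (C/2)) := by
    have h2 : Tendsto (fun x : ℝ => (1+x)⁻¹) (nhdsWithin 1 (Iio 1)) (nhds (2⁻¹)) := by
      refine Tendsto.mono_left ?_ nhdsWithin_le_nhds
      have h4 : Tendsto (fun x : ℝ => 1+x) (nhds 1) (nhds 2) := by
        have h5 := ((continuous_const (y := (1:ℝ))).add continuous_id).tendsto (1:ℝ)
        norm_num at h5
        exact h5
      exact h4.inv₀ (by norm_num)
    have h3 := hreg.mul h2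
    rw [show C * 2⁻¹ = C/2 by ring] at h3
    exact h3.congr fun x => by rw [← div_eq_mul_inv, div_div]
  rw [Metric.tendsto_atTop]
  intro ε hε
  set Γ := Real.Gamma β with hΓdef
  set ε1 := min (C/4) (ε/(8*(Γ+1))) with hε1def
  have hε1 : 0 < ε1 := lt_min (by linarith) (by positivity)
  have hε1C : ε1 ≤ C/4 := min_le_left _ _
  have hε1ε : ε1 ≤ ε/(8*(Γ+1)) := min_le_right _ _
  -- interval where density bounds hold
  have hev : ∀ᶠ x in nhdsWithin 1 (Iio 1), |φ x / ((1-x)^β * (1+x)) - C/2| < ε1 := by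
    have := Metric.tendsto_nhds.1 hq ε1 hε1
    simpa [Real.dist_eq] using this
  obtain ⟨l, hl, hsub⟩ := mem_nhdsLT_iff_exists_Ioo_subset.1 hev
  set c := max l 0 with hcdef
  have hc0 : 0 ≤ c := le_max_right _ _
  have hc1 : c < 1 := max_lt hl zero_lt_one
  have hφb : ∀ x ∈ Ioo c 1,
      (C/2 - ε1) * ((1-x)^β * (1+x)) ≤ φ x ∧ φ x ≤ (C/2 + ε1) * ((1-x)^β * (1+x)) := by
    intro x hx
    have hx' : x ∈ Ioo l 1 := ⟨lt_of_le_of_lt (le_max_left l 0) hx.1, hx.2⟩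
    have h := hsub hx'
    simp only [mem_setOf_eq] at h
    rw [abs_lt] at h
    have hx0 : 0 ≤ x := le_trans hc0 hx.1.le
    have hP : 0 < (1-x)^β * (1+x) := by
      have h1 : 0 < 1 - x := by linarith [hx.2]
      positivity
    have hφx : φ x = (φ x / ((1-x)^β * (1+x))) * ((1-x)^β * (1+x)) :=
      (div_mul_cancel₀ _ hP.ne').symm
    constructor
    · rw [hφx]; nlinarith [h.1, h.2]
    · rw [hφx]; nlinarith [h.1, h.2]
  -- pieces
  set S : Set ℝ := Ioo c 1 with hSdef
  have hSm : MeasurableSet S := measurableSet_Ioo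
  have hSsub : S ⊆ Ico (0:ℝ) 1 := fun x hx => ⟨le_trans hc0 hx.1.le, hx.2⟩
  set JS : ℕ → ℝ := fun t => ∫ x in S, x^t * (1-x)^(β-1) with hJSdef
  have hJSint : ∀ t : ℕ, IntegrableOn (fun x : ℝ => x^t * (1-x)^(β-1)) S volume :=
    fun t => (intInt hβ0 t).mono_set (Ioo_subset_Ioo_left hc0)
  have hJSnn : ∀ t : ℕ, 0 ≤ JS t := by
    intro t
    refine setIntegral_nonneg measurableSet_Ioo fun x hx => ?_
    have h0 : 0 ≤ x := le_trans hc0 hx.1.le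
    have h1 : 0 < 1 - x := by linarith [hx.2]
    positivity
  have hbase : (volume.restrict (Ico (0:ℝ) 1)).restrict S = volume.restrict S := by
    rw [Measure.restrict_restrict hSm, inter_eq_self_of_subset_left hSsub]
  have hup : ν.restrict S ≤ (volume.restrict S).withDensity
      (fun x => ENNReal.ofReal ((C/2 + ε1) * ((1-x)^β * (1+x)))) := by
    rw [hdens, restrict_withDensity hSm, hbase]
    refine withDensity_mono ?_
    filter_upwards [ae_restrict_mem hSm] with x hx
    exact ENNReal.ofReal_le_ofReal (hφb x hx).2
  have hlo : (volume.restrict S).withDensity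
      (fun x => ENNReal.ofReal ((C/2 - ε1) * ((1-x)^β * (1+x)))) ≤ ν.restrict S := by
    rw [hdens, restrict_withDensity hSm, hbase]
    refine withDensity_mono ?_
    filter_upwards [ae_restrict_mem hSm] with x hx
    exact ENNReal.ofReal_le_ofReal (hφb x hx).1
  have hden_meas : ∀ k : ℝ, Measurable fun x : ℝ => ENNReal.ofReal (k * ((1-x)^β * (1+x))) := by
    intro k; fun_prop
  have hcalc : ∀ k : ℝ, 0 ≤ k → ∀ t : ℕ,
      (∫⁻ x, ENNReal.ofReal (x^t/(1-x^2)) ∂((volume.restrict S).withDensity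
        (fun x => ENNReal.ofReal (k * ((1-x)^β * (1+x))))))
        = ENNReal.ofReal (k * JS t) := by
    intro k hk t
    rw [lintegral_withDensity_eq_lintegral_mul _ (hden_meas k)
      (hfm t).ennreal_ofReal]
    have hcong : ∀ᵐ x ∂(volume.restrict S),
        ((fun x : ℝ => ENNReal.ofReal (k * ((1-x)^β * (1+x)))) *
          (fun x : ℝ => ENNReal.ofReal (x^t/(1-x^2)))) x
          = ENNReal.ofReal (k * (x^t * (1-x)^(β-1))) := by
      filter_upwards [ae_restrict_mem hSm] with x hx
      have hx0 : 0 ≤ x := le_trans hc0 hx.1.le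
      have hx1 : 0 < 1 - x := by linarith [hx.2]
      have hx2 : 0 < 1 + x := by linarith
      have hP : 0 ≤ k * ((1-x)^β * (1+x)) := by positivity
      simp only [Pi.mul_apply]
      rw [← ENNReal.ofReal_mul hP]
      congr 1
      have hx3 : 1 - x^2 = (1-x)*(1+x) := by ring
      rw [Real.rpow_sub_one hx1.ne', hx3]
      field_simp
    rw [lintegral_congr_ae hcong]
    have hki : Integrable (fun x : ℝ => k * (x^t * (1-x)^(β-1))) (volume.restrict S) :=
      (hJSint t).const_mul k
    have hknn : 0 ≤ᵐ[volume.restrict S] fun x : ℝ => k * (x^t * (1-x)^(β-1)) := by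
      filter_upwards [ae_restrict_mem hSm] with x hx
      have hx0 : 0 ≤ x := le_trans hc0 hx.1.le
      have hx1 : 0 < 1 - x := by linarith [hx.2]
      positivity
    rw [← ofReal_integral_eq_lintegral_ofReal hki hknn, integral_const_mul]
  have hBt : ∀ t : ℕ, (C/2 - ε1) * JS t ≤ (∫ x in S, x^t/(1-x^2) ∂ν) ∧
      (∫ x in S, x^t/(1-x^2) ∂ν) ≤ (C/2 + ε1) * JS t := by
    intro t
    have hk1 : (0:ℝ) ≤ C/2 - ε1 := by linarith [hε1C]
    have hk2 : (0:ℝ) ≤ C/2 + ε1 := by linarith [hε1.le]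
    have hLdef : (∫ x in S, x^t/(1-x^2) ∂ν)
        = (∫⁻ x in S, ENNReal.ofReal (x^t/(1-x^2)) ∂ν).toReal :=
      integral_eq_lintegral_of_nonneg_ae (ae_restrict_of_ae (hnn t))
        (hfm t).aestronglyMeasurable
    have hUB : (∫⁻ x in S, ENNReal.ofReal (x^t/(1-x^2)) ∂ν)
        ≤ ENNReal.ofReal ((C/2 + ε1) * JS t) := by
      calc (∫⁻ x in S, ENNReal.ofReal (x^t/(1-x^2)) ∂ν)
          ≤ ∫⁻ x, ENNReal.ofReal (x^t/(1-x^2)) ∂((volume.restrict S).withDensity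
            (fun x => ENNReal.ofReal ((C/2 + ε1) * ((1-x)^β * (1+x))))) :=
            lintegral_mono' hup le_rfl
        _ = _ := hcalc _ hk2 t
    have hLB : ENNReal.ofReal ((C/2 - ε1) * JS t)
        ≤ ∫⁻ x in S, ENNReal.ofReal (x^t/(1-x^2)) ∂ν := by
      calc ENNReal.ofReal ((C/2 - ε1) * JS t)
          = ∫⁻ x, ENNReal.ofReal (x^t/(1-x^2)) ∂((volume.restrict S).withDensity
            (fun x => ENNReal.ofReal ((C/2 - ε1) * ((1-x)^β * (1+x))))) := (hcalc _ hk1 t).symm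
        _ ≤ _ := lintegral_mono' hlo le_rfl
    constructor
    · rw [hLdef]
      have h9 := ENNReal.toReal_mono (ne_top_of_le_ne_top ENNReal.ofReal_ne_top hUB) hLB
      rwa [ENNReal.toReal_ofReal (mul_nonneg hk1 (hJSnn t))] at h9
    · rw [hLdef]
      exact ENNReal.toReal_le_of_le_ofReal (mul_nonneg hk2 (hJSnn t)) hUB
  -- A piece
  set A : ℕ → ℝ := fun t => ∫ x in Icc (0:ℝ) c, x^t/(1-x^2) ∂ν with hAdef
  have hAt : ∀ t : ℕ, 0 ≤ A t ∧ A t ≤ c^t * M := by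
    intro t
    constructor
    · exact integral_nonneg_of_ae (ae_restrict_of_ae (hnn t))
    · calc A t ≤ ∫ x in Icc (0:ℝ) c, c^t * (1/(1-x^2)) ∂ν := by
            refine setIntegral_mono_ae_restrict ((hint t).integrableOn)
              ((hmom.const_mul _).integrableOn) ?_
            filter_upwards [ae_restrict_mem measurableSet_Icc, ae_restrict_of_ae hae]
              with x hx1 hx2
            have h1 := hsq x hx2
            rw [div_eq_mul_one_div]
            exact mul_le_mul_of_nonneg_right (pow_le_pow_left₀ hx1.1 hx1.2 t)
              (by positivity)
        _ = c^t * ∫ x in Icc (0:ℝ) c, 1/(1-x^2) ∂ν := integral_const_mul _ _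
        _ ≤ c^t * M := by
            refine mul_le_mul_of_nonneg_left ?_ (pow_nonneg hc0 t)
            exact setIntegral_le_integral hmom (hae.mono fun x hx => by
              have := hsq x hx; positivity)
  have hdecomp : ∀ t : ℕ, (∫ x, x^t/(1-x^2) ∂ν) = A t + ∫ x in S, x^t/(1-x^2) ∂ν := by
    intro t
    have h1 : ν.restrict (Ico (0:ℝ) 1) = ν := Measure.restrict_eq_self_of_ae_mem hae
    have hdisj2 : Disjoint (Icc (0:ℝ) c) (Ioo c 1) := by
      rw [Set.disjoint_left]
      rintro x hx1 hx2
      exact absurd hx1.2 (not_le.2 hx2.1)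
    conv_lhs => rw [← h1, ← Icc_union_Ioo_eq_Ico hc0 hc1]
    rw [setIntegral_union hdisj2 measurableSet_Ioo ((hint t).integrableOn)
      ((hint t).integrableOn)]
  -- limits
  have hJlim : Tendsto (fun t : ℕ => (t:ℝ)^β * JS t) atTop (nhds Γ) :=
    JSlim hβ0 hβ1 hc0 hc1
  have hAlim : Tendsto (fun t : ℕ => (t:ℝ)^β * A t) atTop (nhds 0) := by
    have hlim2 : Tendsto (fun t : ℕ => ((t:ℝ)^β * c^t) * M) atTop (nhds 0) := by
      simpa using (rpowGeom hβ1.le hc0 hc1).mul_const M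
    refine squeeze_zero' ?_ ?_ hlim2
    · filter_upwards with t
      have := (hAt t).1
      positivity
    · filter_upwards with t
      have h2 := (hAt t).2
      have h3 : (0:ℝ) ≤ (t:ℝ)^β := by positivity
      calc (t:ℝ)^β * A t ≤ (t:ℝ)^β * (c^t * M) := mul_le_mul_of_nonneg_left h2 h3
        _ = ((t:ℝ)^β * c^t) * M := by ring
  -- final assembly
  set ε2 := min 1 (ε/(2*C+2)) with hε2def
  have hε2 : 0 < ε2 := lt_min one_pos (by positivity)
  have hε2a : ε2 ≤ 1 := min_le_left _ _
  have hε2b : ε2 ≤ ε/(2*C+2) := min_le_right _ _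
  obtain ⟨N1, hN1⟩ := Metric.tendsto_atTop.1 hJlim ε2 hε2
  obtain ⟨N2, hN2⟩ := Metric.tendsto_atTop.1 hAlim (ε/4) (by linarith)
  refine ⟨max N1 N2, fun t ht => ?_⟩
  have h1 := hN1 t (le_trans (le_max_left _ _) ht)
  have h2 := hN2 t (le_trans (le_max_right _ _) ht)
  rw [Real.dist_eq] at h1 h2 ⊢
  set y := (t:ℝ)^β * JS t with hydef
  set av := (t:ℝ)^β * A t with havdef
  have hrp : (0:ℝ) ≤ (t:ℝ)^β := by positivity
  have hy0 : 0 ≤ y := mul_nonneg hrp (hJSnn t)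
  have hav0 : 0 ≤ av := mul_nonneg hrp (hAt t).1
  rw [sub_zero, abs_of_nonneg hav0] at h2
  rw [abs_lt] at h1
  set bv := (t:ℝ)^β * ∫ x in S, x^t/(1-x^2) ∂ν with hbvdef
  have hb1 : C/2 * y - ε1 * y ≤ bv := by
    have h5 := mul_le_mul_of_nonneg_left (hBt t).1 hrp
    calc C/2 * y - ε1 * y = (t:ℝ)^β * ((C/2 - ε1) * JS t) := by rw [hydef]; ring
      _ ≤ bv := h5
  have hb2 : bv ≤ C/2 * y + ε1 * y := by
    have h5 := mul_le_mul_of_nonneg_left (hBt t).2 hrp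
    calc bv ≤ (t:ℝ)^β * ((C/2 + ε1) * JS t) := h5
      _ = C/2 * y + ε1 * y := by rw [hydef]; ring
  have hgoal_eq : (∫ x, x^t/(1-x^2) ∂ν) * (t:ℝ)^β = av + bv := by
    rw [havdef, hbvdef, hdecomp t]; ring
  rw [hgoal_eq]
  clear_value Γ ε1 ε2 y av bv
  have h2C : (0:ℝ) < 2*C+2 := by linarith
  have key1 : ε2 * (2*C+2) ≤ ε := (le_div_iff₀ h2C).1 hε2b
  have h8Γ : (0:ℝ) < 8*(Γ+1) := by linarith
  have key2 : ε1 * (8*(Γ+1)) ≤ ε := (le_div_iff₀ h8Γ).1 hε1ε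
  have key2' : ε1 * (Γ+1) ≤ ε/8 := by
    have hx : ε1 * (8*(Γ+1)) = 8*(ε1*(Γ+1)) := by ring
    linarith
  have hyub : y < Γ + ε2 := by linarith [h1.2]
  have hylb : Γ - ε2 < y := by linarith [h1.1]
  have hey0 : 0 ≤ ε1 * y := mul_nonneg hε1.le hy0
  have hey : ε1 * y ≤ ε1 * (Γ + 1) :=
    mul_le_mul_of_nonneg_left (by linarith) hε1.le
  have hC2 : (0:ℝ) < C/2 := by linarith
  have hcy1 : C/2 * y < C/2 * Γ + C/2 * ε2 := by
    have h5 := mul_lt_mul_of_pos_left hyub hC2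
    have hx : C/2 * (Γ + ε2) = C/2 * Γ + C/2 * ε2 := by ring
    linarith
  have hcy2 : C/2 * Γ - C/2 * ε2 < C/2 * y := by
    have h5 := mul_lt_mul_of_pos_left hylb hC2
    have hx : C/2 * (Γ - ε2) = C/2 * Γ - C/2 * ε2 := by ring
    linarith
  have hce2 : C/2 * ε2 ≤ ε/4 := by
    have hx : ε2 * (2*C+2) = 4*(C/2*ε2) + 2*ε2 := by ring
    linarith only [key1, hx, hε2]
  rw [abs_lt]
  constructor
  · linarith only [hav0, hb1, hcy2, hce2, hey, key2', hε]
  · linarith only [h2, hb2, hcy1, hce2, hey, key2', hε]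

set_option maxHeartbeats 1000000 in
theorem stmt14 {Ω : Type*} [MeasurableSpace Ω] (μ : Measure Ω) [IsProbabilityMeasure μ]
    (a : Ω → ℝ) (hameas : Measurable a) (σ : ℝ) (hσ : σ ≠ 0)
    (φ : ℝ → ℝ) (β C : ℝ) (hβ0 : 0 < β) (hβ1 : β < 1) (hC : 0 < C)
    (hrange : ∀ᵐ ω ∂μ, a ω ∈ Ico (0:ℝ) 1)
    (hdens : Measure.map a μ =
      (volume.restrict (Ico (0:ℝ) 1)).withDensity (fun x => ENNReal.ofReal (φ x)))
    (hreg : Tendsto (fun x => φ x / (1 - x) ^ β) (nhdsWithin 1 (Iio 1)) (nhds C))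
    (hmom : Integrable (fun ω => 1 / (1 - (a ω) ^ 2)) μ) :
    ∃ C₁ : ℝ, 0 < C₁ ∧
      Tendsto (fun t : ℕ =>
          (σ ^ 2 * ∫ ω, (a ω) ^ t / (1 - (a ω) ^ 2) ∂μ) * (t : ℝ) ^ β) atTop (nhds C₁) ∧
      ¬ Summable (fun t : ℕ => |σ ^ 2 * ∫ ω, (a ω) ^ t / (1 - (a ω) ^ 2) ∂μ|) := by
  set ν := Measure.map a μ with hν
  have hmomν : Integrable (fun x : ℝ => 1/(1-x^2)) ν := by
    rw [hν, integrable_map_measure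
      (by fun_prop : Measurable fun x : ℝ => 1/(1-x^2)).aestronglyMeasurable
      hameas.aemeasurable]
    exact hmom
  have hI : ∀ t : ℕ, (∫ ω, (a ω)^t/(1-(a ω)^2) ∂μ) = ∫ x, x^t/(1-x^2) ∂ν := by
    intro t
    rw [hν, integral_map hameas.aemeasurable
      (by fun_prop : Measurable fun x : ℝ => x^t/(1-x^2)).aestronglyMeasurable]
  have hcore := core hβ0 hβ1 hC hdens hreg hmomν
  have hσ2 : 0 < σ^2 := by positivity
  have hΓ : 0 < Real.Gamma β := Real.Gamma_pos_of_pos hβ0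
  set C₁ := σ^2 * (C/2 * Real.Gamma β) with hC₁def
  have hC₁pos : 0 < C₁ := by positivity
  have htend : Tendsto (fun t : ℕ =>
      (σ ^ 2 * ∫ ω, (a ω) ^ t / (1 - (a ω) ^ 2) ∂μ) * (t : ℝ) ^ β) atTop (nhds C₁) := by
    have h1 := hcore.const_mul (σ^2)
    rw [← hC₁def] at h1
    refine h1.congr fun t => ?_
    rw [hI t]; ring
  refine ⟨C₁, hC₁pos, htend, ?_⟩
  intro hsum
  set u : ℕ → ℝ := fun t => σ ^ 2 * ∫ ω, (a ω) ^ t / (1 - (a ω) ^ 2) ∂μ with hudef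
  have hev : ∀ᶠ t : ℕ in atTop, (C₁/2) / (t:ℝ)^β ≤ |u t| := by
    filter_upwards [(tendsto_order.1 htend).1 (C₁/2) (by linarith),
      eventually_ge_atTop 1] with t h1 h2
    have htp : (0:ℝ) < (t:ℝ)^β := by
      have : (0:ℝ) < (t:ℝ) := by exact_mod_cast h2
      positivity
    have h3 : (C₁/2) / (t:ℝ)^β < u t := (div_lt_iff₀ htp).2 h1
    have h4 : (0:ℝ) ≤ (C₁/2) / (t:ℝ)^β := by positivity
    calc (C₁/2) / (t:ℝ)^β ≤ u t := h3.le
      _ ≤ |u t| := le_abs_self _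
  obtain ⟨N, hN⟩ := eventually_atTop.1 hev
  have h1 : Summable (fun t : ℕ => |u (t + N)|) := (summable_nat_add_iff N).2 hsum
  have h2 : Summable (fun t : ℕ => (C₁/2) / (((t + N : ℕ)):ℝ)^β) := by
    refine Summable.of_nonneg_of_le (fun t => by positivity)
      (fun t => hN (t + N) (Nat.le_add_left N t)) h1
  have h3 : Summable (fun t : ℕ => (C₁/2) / ((t:ℕ):ℝ)^β) := (summable_nat_add_iff N).1 h2
  have h4 : Summable (fun t : ℕ => (((t:ℕ):ℝ)^β)⁻¹) := by
    have h5 := h3.mul_left (2/C₁)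
    refine h5.congr fun t => ?_
    have hC₁ne : C₁ ≠ 0 := ne_of_gt hC₁pos
    have h6 : (2/C₁) * (C₁/2) = 1 := by field_simp
    rw [div_eq_mul_inv (C₁/2) ((t:ℝ)^β), ← mul_assoc, h6, one_mul]
  exact absurd (Real.summable_nat_rpow_inv.1 h4) (by linarith)
end

section
/- Let a be a random variable in (-1,1) with density satisfying φ(x) = ψ(x)(1-x)^β on (1-ε,1), ψ bounded with ψ(1) > 0, 0 < β < 1, and let 1+β < α < 2. Then Σ_{s ≤ n} E|Σ_{t=max(1,s)}^n a^{t-s}|^α = O(n^{α-β}) as n → ∞. -/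
open MeasureTheory Set


/-- Integral of `(1-x)^p` near `x = 1`. -/
lemma stmt16_J1 {p : ℝ} (hp : -1 < p) {c : ℝ} (hc : 0 < c) :
    ∫⁻ x in Ioo (1-c) 1, ENNReal.ofReal ((1-x)^p) ≤ ENNReal.ofReal (c^(p+1)/(p+1)) := by
  have hii : IntervalIntegrable (fun u : ℝ => u ^ p) volume 0 c :=
    intervalIntegral.intervalIntegrable_rpow' hp
  have hii2 : IntervalIntegrable (fun x : ℝ => (1-x) ^ p) volume (1-c) 1 := by
    simpa using (hii.comp_sub_left 1).symm
  have hIoo : IntegrableOn (fun x : ℝ => (1-x)^p) (Ioo (1-c) 1) volume :=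
    (intervalIntegrable_iff_integrableOn_Ioo_of_le (by linarith)).mp hii2
  have hnn : 0 ≤ᵐ[volume.restrict (Ioo (1-c) 1)] fun x : ℝ => (1-x)^p := by
    filter_upwards [ae_restrict_mem measurableSet_Ioo] with x hx
    exact Real.rpow_nonneg (by linarith [hx.2] : (0:ℝ) ≤ 1-x) p
  rw [← ofReal_integral_eq_lintegral_ofReal hIoo hnn]
  apply ENNReal.ofReal_le_ofReal
  have h1 : ∫ x in Ioo (1-c) 1, (1-x)^p = ∫ u in (0:ℝ)..c, u^p := by
    rw [← integral_Ioc_eq_integral_Ioo, ← intervalIntegral.integral_of_le (by linarith : 1-c ≤ 1),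
      intervalIntegral.integral_comp_sub_left (fun u : ℝ => u^p) 1]
    norm_num
  rw [h1, integral_rpow (Or.inl hp), Real.zero_rpow (by linarith : p + 1 ≠ 0), sub_zero]

/-- Integral of `(1-x)^q`, `q < -1`, away from `x = 1`. -/
lemma stmt16_J2 {q : ℝ} (hq : q < -1) {c : ℝ} (hc : 0 < c) (b : ℝ) (hb : b < 1) :
    ∫⁻ x in Ioc b (1-c), ENNReal.ofReal ((1-x)^q) ≤ ENNReal.ofReal (c^(q+1)/(-(q+1))) := by
  rcases le_or_gt (1-c) b with h | h
  · rw [Set.Ioc_eq_empty (by exact fun hlt => absurd h (not_le.mpr hlt)), Measure.restrict_empty,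
      lintegral_zero_measure]
    exact zero_le
  · have hcont : ContinuousOn (fun x : ℝ => (1-x)^q) (Icc b (1-c)) := by
      apply ContinuousOn.rpow_const (by fun_prop)
      intro x hx
      exact Or.inl (by nlinarith [hx.2] : (1:ℝ) - x ≠ 0)
    have hIoc : IntegrableOn (fun x : ℝ => (1-x)^q) (Ioc b (1-c)) volume :=
      (hcont.integrableOn_compact isCompact_Icc).mono_set Ioc_subset_Icc_self
    have hnn : 0 ≤ᵐ[volume.restrict (Ioc b (1-c))] fun x : ℝ => (1-x)^q := by
      filter_upwards [ae_restrict_mem measurableSet_Ioc] with x hx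
      exact Real.rpow_nonneg (by nlinarith [hx.2] : (0:ℝ) ≤ 1-x) q
    rw [← ofReal_integral_eq_lintegral_ofReal hIoc hnn]
    apply ENNReal.ofReal_le_ofReal
    have h1 : ∫ x in Ioc b (1-c), (1-x)^q = ∫ u in c..(1-b), u^q := by
      rw [← intervalIntegral.integral_of_le h.le,
        intervalIntegral.integral_comp_sub_left (fun u : ℝ => u^q) 1]
      norm_num
    have h0c : (0:ℝ) ∉ uIcc c (1-b) := by
      rw [Set.uIcc_of_le (by linarith : c ≤ 1-b)]
      intro h0; exact absurd h0.1 (not_le.mpr hc)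
    rw [h1, integral_rpow (Or.inr ⟨by linarith, h0c⟩)]
    have hq1 : q + 1 ≠ 0 := by linarith
    have h2 : ((1-b)^(q+1) - c^(q+1))/(q+1) = (c^(q+1) - (1-b)^(q+1))/(-(q+1)) := by
      rw [div_neg, ← neg_div, neg_sub]
    rw [h2]
    have h3 : c^(q+1) - (1-b)^(q+1) ≤ c^(q+1) := by
      nlinarith [Real.rpow_nonneg (by linarith : (0:ℝ) ≤ 1-b) (q+1)]
    exact (div_le_div_iff_of_pos_right (by linarith : (0:ℝ) < -(q+1))).mpr h3


lemma stmt16_key (n : ℕ) (hn : 1 ≤ n) (α : ℝ) (hα : 1 ≤ α) (x : ℝ)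
    (hx1 : -1 < x) (hx2 : x < 1) (S : Finset {s : ℤ // s ≤ (n : ℤ)}) :
    ∑ s ∈ S, |∑ t ∈ Finset.Icc (max 1 s.1) (n : ℤ), x ^ (t - s.1).toNat| ^ α
      ≤ (min (n:ℝ) (2/(1-x)))^α * ((n:ℝ) + max (1/(1-|x|)) 0) := by
  have hxabs : |x| < 1 := abs_lt.mpr ⟨hx1, hx2⟩
  have h1x : (0:ℝ) < 1 - x := by linarith
  set G : ℝ := min (n:ℝ) (2/(1-x)) with hG
  have hG0 : 0 ≤ G := le_min (by positivity) (by positivity)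
  have hGα0 : 0 ≤ G ^ α := Real.rpow_nonneg hG0 α
  have hterm : ∀ s : {s : ℤ // s ≤ (n:ℤ)},
      |∑ t ∈ Finset.Icc (max 1 s.1) (n:ℤ), x ^ (t - s.1).toNat| ^ α
        ≤ |x| ^ (1 - s.1).toNat * G ^ α := by
    intro s
    set s0 : ℤ := max 1 s.1 with hs0
    have hs01 : (1:ℤ) ≤ s0 := le_max_left _ _
    have hs0s : s.1 ≤ s0 := le_max_right _ _
    have hs0c : s0 = 1 ∨ s0 = s.1 := max_choice 1 s.1
    set L : ℕ := ((n:ℤ) + 1 - s0).toNat with hL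
    have hre : ∑ t ∈ Finset.Icc s0 (n:ℤ), x ^ (t - s.1).toNat
        = ∑ j ∈ Finset.range L, x ^ (1 - s.1).toNat * x ^ j := by
      refine Finset.sum_nbij' (fun t => (t - s0).toNat) (fun k => s0 + (k:ℤ)) ?_ ?_ ?_ ?_ ?_
      · intro t ht; simp only [Finset.mem_Icc] at ht; simp only [Finset.mem_range, hL]
        beta_reduce; omega
      · intro k hk; simp only [Finset.mem_range, hL] at hk; simp only [Finset.mem_Icc]
        beta_reduce; omega
      · intro t ht; simp only [Finset.mem_Icc] at ht; beta_reduce; omega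
      · intro k hk; simp only [Finset.mem_range, hL] at hk; beta_reduce; omega
      · intro t ht; simp only [Finset.mem_Icc] at ht
        beta_reduce
        rw [← pow_add]
        congr 1
        rcases hs0c with h | h <;> omega
    have hgeom : |∑ j ∈ Finset.range L, x ^ j| ≤ G := by
      refine le_min ?_ ?_
      · calc |∑ j ∈ Finset.range L, x ^ j| ≤ ∑ j ∈ Finset.range L, |x ^ j| :=
            Finset.abs_sum_le_sum_abs _ _
          _ ≤ (Finset.range L).card • (1:ℝ) := Finset.sum_le_card_nsmul _ _ 1
              (fun j _ => by rw [abs_pow]; exact pow_le_one₀ (abs_nonneg x) hxabs.le)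
          _ = (L:ℝ) := by simp
          _ ≤ (n:ℝ) := by
            have : L ≤ n := by omega
            exact_mod_cast this
      · rw [geom_sum_eq (ne_of_lt hx2), abs_div]
        have h2 : |x - 1| = 1 - x := by
          rw [abs_of_neg (by linarith : x - 1 < 0)]; ring
        rw [h2]
        have h3 : |x ^ L - 1| ≤ 2 := by
          have h4 : |x ^ L| ≤ 1 := by rw [abs_pow]; exact pow_le_one₀ (abs_nonneg x) hxabs.le
          rw [abs_sub_comm]
          calc |1 - x ^ L| ≤ |(1:ℝ)| + |x ^ L| := abs_sub _ _
            _ ≤ 2 := by rw [abs_one]; linarith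
        exact div_le_div_of_nonneg_right h3 h1x.le
    have habs : |∑ t ∈ Finset.Icc s0 (n:ℤ), x ^ (t - s.1).toNat|
        ≤ |x| ^ (1 - s.1).toNat * G := by
      rw [hre, ← Finset.mul_sum, abs_mul, abs_pow]
      exact mul_le_mul_of_nonneg_left hgeom (pow_nonneg (abs_nonneg x) _)
    have h0 : (0:ℝ) ≤ |x| ^ (1 - s.1).toNat := pow_nonneg (abs_nonneg x) _
    calc |∑ t ∈ Finset.Icc s0 (n:ℤ), x ^ (t - s.1).toNat| ^ α
        ≤ (|x| ^ (1 - s.1).toNat * G) ^ α :=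
          Real.rpow_le_rpow (abs_nonneg _) habs (by linarith)
      _ = (|x| ^ (1 - s.1).toNat) ^ α * G ^ α := Real.mul_rpow h0 hG0
      _ ≤ |x| ^ (1 - s.1).toNat * G ^ α := by
          refine mul_le_mul_of_nonneg_right ?_ hGα0
          rcases eq_or_lt_of_le h0 with h | h
          · rw [← h, Real.zero_rpow (by linarith : α ≠ 0)]
          · have hy1 : |x| ^ (1 - s.1).toNat ≤ 1 := pow_le_one₀ (abs_nonneg x) hxabs.le
            calc (|x| ^ (1 - s.1).toNat) ^ α ≤ (|x| ^ (1 - s.1).toNat) ^ (1:ℝ) :=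
                Real.rpow_le_rpow_of_exponent_ge h hy1 hα
              _ = |x| ^ (1 - s.1).toNat := Real.rpow_one _
  have hsum : ∑ s ∈ S, |x| ^ (1 - s.1).toNat ≤ (n:ℝ) + max (1/(1-|x|)) 0 := by
    classical
    rw [← Finset.sum_filter_add_sum_filter_not S (fun s => s.1 ≤ 0)]
    have hA : ∑ s ∈ S.filter (fun s => s.1 ≤ 0), |x| ^ (1 - s.1).toNat
        ≤ max (1/(1-|x|)) 0 := by
      have hinj : ∀ u ∈ S.filter (fun s => s.1 ≤ 0), ∀ v ∈ S.filter (fun s => s.1 ≤ 0),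
          (1 - u.1).toNat = (1 - v.1).toNat → u = v := by
        intro u hu v hv h
        simp only [Finset.mem_filter] at hu hv
        exact Subtype.ext (by omega)
      calc ∑ s ∈ S.filter (fun s => s.1 ≤ 0), |x| ^ (1 - s.1).toNat
          = ∑ k ∈ (S.filter (fun s => s.1 ≤ 0)).image (fun s => (1 - s.1).toNat), |x| ^ k :=
            (Finset.sum_image hinj).symm
        _ ≤ ∑' k : ℕ, |x| ^ k := Summable.sum_le_tsum _ (fun k _ => pow_nonneg (abs_nonneg x) k)
            (summable_geometric_of_lt_one (abs_nonneg x) hxabs)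
        _ = (1-|x|)⁻¹ := tsum_geometric_of_lt_one (abs_nonneg x) hxabs
        _ ≤ max (1/(1-|x|)) 0 := by rw [inv_eq_one_div]; exact le_max_left _ _
    have hB : ∑ s ∈ S.filter (fun s => ¬ s.1 ≤ 0), |x| ^ (1 - s.1).toNat ≤ (n:ℝ) := by
      have hcard : (S.filter (fun s => ¬ s.1 ≤ 0)).card ≤ n := by
        have h1 : (S.filter (fun s => ¬ s.1 ≤ 0)).card ≤ (Finset.Icc (1:ℤ) (n:ℤ)).card := by
          refine Finset.card_le_card_of_injOn (fun s => s.1) ?_ ?_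
          · intro s hs
            simp only [Finset.mem_coe, Finset.mem_filter] at hs
            simp only [Finset.mem_coe, Finset.mem_Icc]
            exact ⟨by omega, s.2⟩
          · intro u _ v _ h
            exact Subtype.ext h
        rw [Int.card_Icc] at h1
        omega
      calc ∑ s ∈ S.filter (fun s => ¬ s.1 ≤ 0), |x| ^ (1 - s.1).toNat
          ≤ (S.filter (fun s => ¬ s.1 ≤ 0)).card • (1:ℝ) := Finset.sum_le_card_nsmul _ _ 1
            (fun s _ => pow_le_one₀ (abs_nonneg x) hxabs.le)
        _ = ((S.filter (fun s => ¬ s.1 ≤ 0)).card : ℝ) := by simp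
        _ ≤ (n:ℝ) := by exact_mod_cast hcard
    linarith
  calc ∑ s ∈ S, |∑ t ∈ Finset.Icc (max 1 s.1) (n : ℤ), x ^ (t - s.1).toNat| ^ α
      ≤ ∑ s ∈ S, |x| ^ (1 - s.1).toNat * G ^ α := Finset.sum_le_sum (fun s _ => hterm s)
    _ = (∑ s ∈ S, |x| ^ (1 - s.1).toNat) * G ^ α := by rw [Finset.sum_mul]
    _ ≤ ((n:ℝ) + max (1/(1-|x|)) 0) * G ^ α := mul_le_mul_of_nonneg_right hsum hGα0
    _ = G ^ α * ((n:ℝ) + max (1/(1-|x|)) 0) := mul_comm _ _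
set_option maxHeartbeats 1000000 in
theorem stmt16 {Ω : Type*} [MeasurableSpace Ω] (μ : Measure Ω) [IsProbabilityMeasure μ]
    (a : Ω → ℝ) (hameas : Measurable a) (φ ψ : ℝ → ℝ) (β α ε : ℝ)
    (hβ0 : 0 < β) (hβ1 : β < 1) (hα1 : 1 + β < α) (hα2 : α < 2)
    (hε : 0 < ε) (hε1 : ε < 1)
    (hdens : Measure.map a μ =
      (volume.restrict (Ioo (-1:ℝ) 1)).withDensity (fun x => ENNReal.ofReal (φ x)))
    (hφ : ∀ x ∈ Ioo (1 - ε) (1:ℝ), φ x = ψ x * (1 - x) ^ β)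
    (hψbdd : ∃ M : ℝ, ∀ x, |ψ x| ≤ M) (hψ1 : 0 < ψ 1)
    (hmom : Integrable (fun ω => 1 / (1 - |a ω|)) μ) :
    ∃ K : ℝ, ∀ n : ℕ, 1 ≤ n →
      (∑' s : {s : ℤ // s ≤ (n : ℤ)},
          ∫ ω, |∑ t ∈ Finset.Icc (max 1 s.1) (n : ℤ), (a ω) ^ (t - s.1).toNat| ^ α ∂μ)
        ≤ K * (n : ℝ) ^ (α - β) := by
  classical
  obtain ⟨M, hM⟩ := hψbdd
  have hM0 : 0 ≤ M := le_trans (abs_nonneg _) (hM 1)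
  have hα0 : (1:ℝ) ≤ α := by linarith
  -- a.e. membership of `a ω` in `(-1,1)`
  have hae : ∀ᵐ ω ∂μ, a ω ∈ Ioo (-1:ℝ) 1 := by
    have h1 : Measure.map a μ ((Ioo (-1:ℝ) 1)ᶜ) = 0 := by
      rw [hdens, withDensity_apply _ measurableSet_Ioo.compl,
        Measure.restrict_restrict measurableSet_Ioo.compl, Set.compl_inter_self,
        Measure.restrict_empty, lintegral_zero_measure]
    have h2 : μ (a ⁻¹' (Ioo (-1:ℝ) 1)ᶜ) = 0 := by
      rw [← Measure.map_apply hameas measurableSet_Ioo.compl]; exact h1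
    rw [ae_iff]
    have hss : {ω | ¬ a ω ∈ Ioo (-1:ℝ) 1} = a ⁻¹' (Ioo (-1:ℝ) 1)ᶜ := rfl
    rw [hss]
    exact h2
  -- moment constant
  set Lm : ENNReal := ∫⁻ ω, ENNReal.ofReal (max (1/(1-|a ω|)) 0) ∂μ with hLmdef
  have hLmtop : Lm ≠ ⊤ := by
    have h1 : Integrable (fun ω => max (1/(1-|a ω|)) 0) μ := hmom.pos_part
    exact h1.lintegral_lt_top.ne
  set Cm : ℝ := Lm.toReal with hCmdef
  have hCm0 : 0 ≤ Cm := ENNReal.toReal_nonneg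
  have hLmC : Lm = ENNReal.ofReal Cm := (ENNReal.ofReal_toReal hLmtop).symm
  -- constants
  set KA : ℝ := (2/ε)^α * (1 + Cm) with hKAdef
  set KB : ℝ := M*2^(β+1)/(β+1) + M*2^β/β + M*2^(β+1)/(α-1-β) + M*2^β/(α-β) with hKBdef
  have hd1 : (0:ℝ) < β + 1 := by linarith
  have hd2 : (0:ℝ) < α - 1 - β := by linarith
  have hd3 : (0:ℝ) < α - β := by linarith
  have hKA0 : 0 ≤ KA := mul_nonneg (Real.rpow_nonneg (by positivity) _) (by linarith)
  have hKB0 : 0 ≤ KB := by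
    rw [hKBdef]
    have h1 : (0:ℝ) ≤ M*2^(β+1) := by positivity
    have h2 : (0:ℝ) ≤ M*2^β := by positivity
    have d1 := div_nonneg h1 hd1.le
    have d2 := div_nonneg h2 hβ0.le
    have d3 := div_nonneg h1 hd2.le
    have d4 := div_nonneg h2 hd3.le
    linarith
  refine ⟨KA + KB, fun n hn => ?_⟩
  have hn1 : (1:ℝ) ≤ (n:ℝ) := by exact_mod_cast hn
  have hnpos : (0:ℝ) < (n:ℝ) := by linarith
  have hpow1 : (n:ℝ) ≤ (n:ℝ)^(α-β) := by
    calc (n:ℝ) = (n:ℝ)^(1:ℝ) := (Real.rpow_one _).symm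
      _ ≤ (n:ℝ)^(α-β) := Real.rpow_le_rpow_of_exponent_le hn1 (by linarith)
  have hpow0 : 0 ≤ (n:ℝ)^(α-β) := Real.rpow_nonneg hnpos.le _
  set F : ℝ → ℝ := fun x => (min (n:ℝ) (2/(1-x)))^α * ((n:ℝ) + max (1/(1-|x|)) 0) with hFdef
  have hFmeas : Measurable F := by fun_prop
  have hFnn : ∀ x : ℝ, x < 1 → 0 ≤ F x := by
    intro x hx
    have h1x : (0:ℝ) < 1 - x := by linarith
    apply mul_nonneg (Real.rpow_nonneg (le_min hnpos.le (by positivity)) _)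
    exact add_nonneg hnpos.le (le_max_right _ _)
  -- integrability of F ∘ a
  have hFint : Integrable (fun ω => F (a ω)) μ := by
    have hint2 : Integrable (fun ω => (n:ℝ)^α * ((n:ℝ) + max (1/(1-|a ω|)) 0)) μ :=
      (((integrable_const _).add hmom.pos_part).const_mul _)
    have hcomp : AEStronglyMeasurable (fun ω => F (a ω)) μ :=
      (hFmeas.comp hameas).aestronglyMeasurable
    apply Integrable.mono' hint2 hcomp
    filter_upwards [hae] with ω hω
    rw [Real.norm_eq_abs, abs_of_nonneg (hFnn _ hω.2)]
    have h1x : (0:ℝ) < 1 - a ω := by linarith [hω.2]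
    have hminnn : 0 ≤ min (n:ℝ) (2/(1-a ω)) := le_min hnpos.le (by positivity)
    exact mul_le_mul_of_nonneg_right
      (Real.rpow_le_rpow hminnn (min_le_left _ _) (by linarith))
      (add_nonneg hnpos.le (le_max_right _ _))
  -- each summand is integrable
  have hgs_int : ∀ s : {s : ℤ // s ≤ (n:ℤ)}, Integrable
      (fun ω => |∑ t ∈ Finset.Icc (max 1 s.1) (n:ℤ), (a ω) ^ (t - s.1).toNat| ^ α) μ := by
    intro s
    have hmeasg : Measurable fun ω =>
        |∑ t ∈ Finset.Icc (max 1 s.1) (n:ℤ), (a ω) ^ (t - s.1).toNat| ^ α := by fun_prop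
    apply Integrable.mono' hFint hmeasg.aestronglyMeasurable
    filter_upwards [hae] with ω hω
    rw [Real.norm_eq_abs, abs_of_nonneg (Real.rpow_nonneg (abs_nonneg _) _)]
    have h := stmt16_key n hn α hα0 (a ω) hω.1 hω.2 {s}
    rw [Finset.sum_singleton] at h
    exact h.trans (le_of_eq (by rw [hFdef]))
  -- THE MAIN LINTEGRAL ESTIMATE
  have hmain : ∫⁻ ω, ENNReal.ofReal (F (a ω)) ∂μ
      ≤ ENNReal.ofReal ((KA + KB) * (n:ℝ)^(α-β)) := by
    rw [← lintegral_map (hFmeas.ennreal_ofReal) hameas]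
    rw [← lintegral_add_compl (fun x => ENNReal.ofReal (F x))
      (measurableSet_Iic (a := 1-ε)), Set.compl_Iic]
    have hA : (∫⁻ x in Iic (1-ε), ENNReal.ofReal (F x) ∂(Measure.map a μ))
        ≤ ENNReal.ofReal (KA * (n:ℝ)^(α-β)) := by
      have hb1 : ∀ x ∈ Iic (1-ε), ENNReal.ofReal (F x)
          ≤ ENNReal.ofReal ((2/ε)^α * ((n:ℝ) + max (1/(1-|x|)) 0)) := by
        intro x hx
        apply ENNReal.ofReal_le_ofReal
        simp only [hFdef]
        have h1x : (0:ℝ) < 1 - x := by simp only [mem_Iic] at hx; linarith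
        have hminnn : 0 ≤ min (n:ℝ) (2/(1-x)) := le_min hnpos.le (by positivity)
        refine mul_le_mul_of_nonneg_right ?_ (add_nonneg hnpos.le (le_max_right _ _))
        refine Real.rpow_le_rpow hminnn ((min_le_right _ _).trans ?_) (by linarith)
        rw [div_le_div_iff₀ h1x hε]
        simp only [mem_Iic] at hx
        nlinarith
      calc ∫⁻ x in Iic (1-ε), ENNReal.ofReal (F x) ∂(Measure.map a μ)
          ≤ ∫⁻ x in Iic (1-ε),
              ENNReal.ofReal ((2/ε)^α * ((n:ℝ) + max (1/(1-|x|)) 0)) ∂(Measure.map a μ) :=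
            setLIntegral_mono (by fun_prop) hb1
        _ ≤ ∫⁻ x, ENNReal.ofReal ((2/ε)^α * ((n:ℝ) + max (1/(1-|x|)) 0)) ∂(Measure.map a μ) :=
            setLIntegral_le_lintegral _ _
        _ = ∫⁻ ω, ENNReal.ofReal ((2/ε)^α * ((n:ℝ) + max (1/(1-|a ω|)) 0)) ∂μ :=
            lintegral_map (by fun_prop) hameas
        _ = ENNReal.ofReal ((2/ε)^α) * (ENNReal.ofReal (n:ℝ) + Lm) := by
            simp_rw [ENNReal.ofReal_mul (Real.rpow_nonneg (by positivity : (0:ℝ) ≤ 2/ε) α),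
              ENNReal.ofReal_add hnpos.le (le_max_right _ _)]
            rw [lintegral_const_mul' _ _ ENNReal.ofReal_ne_top,
              lintegral_add_left measurable_const, lintegral_const, measure_univ, mul_one]
        _ ≤ ENNReal.ofReal (KA * (n:ℝ)^(α-β)) := by
            rw [hLmC, ← ENNReal.ofReal_add hnpos.le hCm0,
              ← ENNReal.ofReal_mul (Real.rpow_nonneg (by positivity : (0:ℝ) ≤ 2/ε) α)]
            apply ENNReal.ofReal_le_ofReal
            have hrp : (0:ℝ) ≤ (2/ε)^α := Real.rpow_nonneg (by positivity) α
            calc (2/ε)^α * ((n:ℝ) + Cm) ≤ (2/ε)^α * ((1 + Cm) * (n:ℝ)) := by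
                  refine mul_le_mul_of_nonneg_left ?_ hrp
                  nlinarith
              _ = KA * (n:ℝ) := by rw [hKAdef]; ring
              _ ≤ KA * (n:ℝ)^(α-β) := mul_le_mul_of_nonneg_left hpow1 hKA0
    have hB : (∫⁻ x in Ioi (1-ε), ENNReal.ofReal (F x) ∂(Measure.map a μ))
        ≤ ENNReal.ofReal (KB * (n:ℝ)^(α-β)) := by
      have hres : (Measure.map a μ).restrict (Ioi (1-ε))
          = (volume.restrict (Ioo (1-ε) 1)).withDensity (fun x => ENNReal.ofReal (φ x)) := by
        rw [hdens, restrict_withDensity measurableSet_Ioi,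
          Measure.restrict_restrict measurableSet_Ioi]
        congr 2
        ext x
        simp only [mem_inter_iff, mem_Ioi, mem_Ioo]
        constructor
        · rintro ⟨h1, _, h3⟩; exact ⟨h1, h3⟩
        · rintro ⟨h1, h2⟩; exact ⟨h1, by linarith, h2⟩
      have hwd : (volume.restrict (Ioo (1-ε) 1)).withDensity (fun x => ENNReal.ofReal (φ x))
          ≤ (volume.restrict (Ioo (1-ε) 1)).withDensity
            (fun x => ENNReal.ofReal (M * (1-x)^β)) := by
        apply withDensity_mono
        filter_upwards [ae_restrict_mem measurableSet_Ioo] with x hx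
        apply ENNReal.ofReal_le_ofReal
        rw [hφ x hx]
        exact mul_le_mul_of_nonneg_right ((le_abs_self _).trans (hM x))
          (Real.rpow_nonneg (by linarith [hx.2] : (0:ℝ) ≤ 1-x) _)
      have hMmeas : Measurable fun x : ℝ => ENNReal.ofReal (M * (1-x)^β) := by fun_prop
      have step1 : (∫⁻ x in Ioi (1-ε), ENNReal.ofReal (F x) ∂(Measure.map a μ))
          ≤ ∫⁻ x in Ioo (1-ε) 1,
              ENNReal.ofReal (M*(1-x)^β) * ENNReal.ofReal (F x) ∂volume := by
        calc ∫⁻ x in Ioi (1-ε), ENNReal.ofReal (F x) ∂(Measure.map a μ)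
            = ∫⁻ x, ENNReal.ofReal (F x)
                ∂((volume.restrict (Ioo (1-ε) 1)).withDensity
                  (fun x => ENNReal.ofReal (φ x))) := by rw [← hres]
          _ ≤ ∫⁻ x, ENNReal.ofReal (F x)
                ∂((volume.restrict (Ioo (1-ε) 1)).withDensity
                  (fun x => ENNReal.ofReal (M*(1-x)^β))) := lintegral_mono' hwd (le_refl _)
          _ = ∫⁻ x in Ioo (1-ε) 1,
                ENNReal.ofReal (M*(1-x)^β) * ENNReal.ofReal (F x) ∂volume := by
              rw [lintegral_withDensity_eq_lintegral_mul _ hMmeas (hFmeas.ennreal_ofReal)]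
              rfl
      refine step1.trans ?_
      -- split at 1 - 2/n
      set c2 : ℝ := 2/(n:ℝ) with hc2def
      have hc2pos : 0 < c2 := by positivity
      have hC1 : (0:ℝ) ≤ M*(n:ℝ)^α*(n:ℝ) :=
        mul_nonneg (mul_nonneg hM0 (Real.rpow_nonneg hnpos.le _)) hnpos.le
      have hC2 : (0:ℝ) ≤ M*(n:ℝ)^α := mul_nonneg hM0 (Real.rpow_nonneg hnpos.le _)
      have hC3 : (0:ℝ) ≤ M*2^α*(n:ℝ) :=
        mul_nonneg (mul_nonneg hM0 (Real.rpow_nonneg (by norm_num : (0:ℝ) ≤ 2) _)) hnpos.le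
      have hC4 : (0:ℝ) ≤ M*2^α := mul_nonneg hM0 (Real.rpow_nonneg (by norm_num : (0:ℝ) ≤ 2) _)
      set H : ℝ → ENNReal := fun x => ENNReal.ofReal (M*(1-x)^β) * ENNReal.ofReal (F x) with hHdef
      have hsplit : ∫⁻ x in Ioo (1-ε) 1, H x ∂volume
          = (∫⁻ x in Ioi (1-c2) ∩ Ioo (1-ε) 1, H x ∂volume)
            + ∫⁻ x in Iic (1-c2) ∩ Ioo (1-ε) 1, H x ∂volume := by
        rw [← lintegral_add_compl H (measurableSet_Ioi (a := 1-c2))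
            (μ := volume.restrict (Ioo (1-ε) 1)),
          Measure.restrict_restrict measurableSet_Ioi, Set.compl_Ioi,
          Measure.restrict_restrict measurableSet_Iic]
      rw [hsplit]
      -- region 1 : near 1
      have hreg1 : (∫⁻ x in Ioi (1-c2) ∩ Ioo (1-ε) 1, H x ∂volume)
          ≤ ENNReal.ofReal (M*(n:ℝ)^α*(n:ℝ)) * ENNReal.ofReal (c2^(β+1)/(β+1))
            + ENNReal.ofReal (M*(n:ℝ)^α) * ENNReal.ofReal (c2^((β-1)+1)/((β-1)+1)) := by
        have hptw : ∀ x ∈ Ioi (1-c2) ∩ Ioo (1-ε) 1, H x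
            ≤ ENNReal.ofReal (M*(n:ℝ)^α*(n:ℝ)) * ENNReal.ofReal ((1-x)^β)
              + ENNReal.ofReal (M*(n:ℝ)^α) * ENNReal.ofReal ((1-x)^(β-1)) := by
          rintro x ⟨hxa, hxb, hxc⟩
          have h1x : (0:ℝ) < 1 - x := by linarith
          have hx0 : (0:ℝ) < x := by linarith
          have hFle : F x ≤ (n:ℝ)^α * ((n:ℝ) + (1-x)⁻¹) := by
            rw [hFdef]
            dsimp only
            have hmax : max (1/(1-|x|)) 0 = (1-x)⁻¹ := by
              rw [abs_of_pos hx0, one_div, max_eq_left (by positivity)]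
            rw [hmax]
            refine mul_le_mul_of_nonneg_right ?_ (by positivity)
            exact Real.rpow_le_rpow (le_min hnpos.le (by positivity))
              (min_le_left _ _) (by linarith)
          have hMb : (0:ℝ) ≤ M*(1-x)^β := mul_nonneg hM0 (Real.rpow_nonneg h1x.le _)
          calc H x = ENNReal.ofReal (M*(1-x)^β * F x) := by
                rw [hHdef]; dsimp only; rw [ENNReal.ofReal_mul hMb]
            _ ≤ ENNReal.ofReal (M*(n:ℝ)^α*(n:ℝ) * (1-x)^β + M*(n:ℝ)^α * (1-x)^(β-1)) := by
                apply ENNReal.ofReal_le_ofReal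
                have e4 : (1-x)^(β-1) = (1-x)^β * (1-x)⁻¹ := by
                  rw [Real.rpow_sub h1x β 1, Real.rpow_one, div_eq_mul_inv]
                calc M*(1-x)^β * F x ≤ M*(1-x)^β * ((n:ℝ)^α * ((n:ℝ) + (1-x)⁻¹)) :=
                      mul_le_mul_of_nonneg_left hFle hMb
                  _ = M*(n:ℝ)^α*(n:ℝ) * (1-x)^β + M*(n:ℝ)^α * (1-x)^(β-1) := by
                      rw [e4]; ring
            _ = ENNReal.ofReal (M*(n:ℝ)^α*(n:ℝ)) * ENNReal.ofReal ((1-x)^β)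
                + ENNReal.ofReal (M*(n:ℝ)^α) * ENNReal.ofReal ((1-x)^(β-1)) := by
                rw [ENNReal.ofReal_add (mul_nonneg hC1
                    (Real.rpow_nonneg h1x.le _)) (mul_nonneg hC2
                    (Real.rpow_nonneg h1x.le _))]
                congr 1
                · exact ENNReal.ofReal_mul hC1
                · exact ENNReal.ofReal_mul hC2
        calc (∫⁻ x in Ioi (1-c2) ∩ Ioo (1-ε) 1, H x ∂volume)
            ≤ ∫⁻ x in Ioi (1-c2) ∩ Ioo (1-ε) 1,
                (ENNReal.ofReal (M*(n:ℝ)^α*(n:ℝ)) * ENNReal.ofReal ((1-x)^β)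
                  + ENNReal.ofReal (M*(n:ℝ)^α) * ENNReal.ofReal ((1-x)^(β-1))) ∂volume :=
              setLIntegral_mono (by fun_prop) hptw
          _ ≤ ∫⁻ x in Ioo (1-c2) 1,
                (ENNReal.ofReal (M*(n:ℝ)^α*(n:ℝ)) * ENNReal.ofReal ((1-x)^β)
                  + ENNReal.ofReal (M*(n:ℝ)^α) * ENNReal.ofReal ((1-x)^(β-1))) ∂volume := by
              apply lintegral_mono_set
              rintro x ⟨hxa, _, hxc⟩
              exact ⟨hxa, hxc⟩
          _ = ENNReal.ofReal (M*(n:ℝ)^α*(n:ℝ)) * ∫⁻ x in Ioo (1-c2) 1,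
                ENNReal.ofReal ((1-x)^β) ∂volume
              + ENNReal.ofReal (M*(n:ℝ)^α) * ∫⁻ x in Ioo (1-c2) 1,
                ENNReal.ofReal ((1-x)^(β-1)) ∂volume := by
              rw [lintegral_add_left (by fun_prop),
                lintegral_const_mul' _ _ ENNReal.ofReal_ne_top,
                lintegral_const_mul' _ _ ENNReal.ofReal_ne_top]
          _ ≤ _ := add_le_add
              (mul_le_mul_right (stmt16_J1 (by linarith) hc2pos) _)
              (mul_le_mul_right (stmt16_J1 (by linarith : (-1:ℝ) < β-1) hc2pos) _)
      -- region 2 : away from 1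
      have hreg2 : (∫⁻ x in Iic (1-c2) ∩ Ioo (1-ε) 1, H x ∂volume)
          ≤ ENNReal.ofReal (M*2^α*(n:ℝ)) * ENNReal.ofReal (c2^((β-α)+1)/(-((β-α)+1)))
            + ENNReal.ofReal (M*2^α) * ENNReal.ofReal (c2^((β-α-1)+1)/(-((β-α-1)+1))) := by
        have hptw : ∀ x ∈ Iic (1-c2) ∩ Ioo (1-ε) 1, H x
            ≤ ENNReal.ofReal (M*2^α*(n:ℝ)) * ENNReal.ofReal ((1-x)^(β-α))
              + ENNReal.ofReal (M*2^α) * ENNReal.ofReal ((1-x)^(β-α-1)) := by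
          rintro x ⟨hxa, hxb, hxc⟩
          simp only [mem_Iic] at hxa
          have h1x : (0:ℝ) < 1 - x := by linarith
          have hc2le : c2 ≤ 1 - x := by linarith
          have hx0 : (0:ℝ) < x := by linarith
          have hFle : F x ≤ (2/(1-x))^α * ((n:ℝ) + (1-x)⁻¹) := by
            rw [hFdef]
            dsimp only
            have hmax : max (1/(1-|x|)) 0 = (1-x)⁻¹ := by
              rw [abs_of_pos hx0, one_div, max_eq_left (by positivity)]
            rw [hmax]
            refine mul_le_mul_of_nonneg_right ?_ (by positivity)
            exact Real.rpow_le_rpow (le_min hnpos.le (by positivity))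
              (min_le_right _ _) (by linarith)
          have hMb : (0:ℝ) ≤ M*(1-x)^β := mul_nonneg hM0 (Real.rpow_nonneg h1x.le _)
          have e3 : (2/(1-x))^α = 2^α * ((1-x)^α)⁻¹ := by
            rw [Real.div_rpow (by norm_num) h1x.le, div_eq_mul_inv]
          have e1 : (1-x)^(β-α) = (1-x)^β * ((1-x)^α)⁻¹ := by
            rw [Real.rpow_sub h1x β α, div_eq_mul_inv]
          have e2 : (1-x)^(β-α-1) = (1-x)^β * ((1-x)^α)⁻¹ * (1-x)⁻¹ := by
            rw [Real.rpow_sub h1x (β-α) 1, Real.rpow_one, e1, div_eq_mul_inv]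
          calc H x = ENNReal.ofReal (M*(1-x)^β * F x) := by
                rw [hHdef]; dsimp only; rw [ENNReal.ofReal_mul hMb]
            _ ≤ ENNReal.ofReal (M*2^α*(n:ℝ) * (1-x)^(β-α) + M*2^α * (1-x)^(β-α-1)) := by
                apply ENNReal.ofReal_le_ofReal
                calc M*(1-x)^β * F x ≤ M*(1-x)^β * ((2/(1-x))^α * ((n:ℝ) + (1-x)⁻¹)) :=
                      mul_le_mul_of_nonneg_left hFle hMb
                  _ = M*2^α*(n:ℝ) * (1-x)^(β-α) + M*2^α * (1-x)^(β-α-1) := by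
                      rw [e3, e1, e2]; ring
            _ = ENNReal.ofReal (M*2^α*(n:ℝ)) * ENNReal.ofReal ((1-x)^(β-α))
                + ENNReal.ofReal (M*2^α) * ENNReal.ofReal ((1-x)^(β-α-1)) := by
                rw [ENNReal.ofReal_add (mul_nonneg hC3
                    (Real.rpow_nonneg h1x.le _)) (mul_nonneg hC4
                    (Real.rpow_nonneg h1x.le _))]
                congr 1
                · exact ENNReal.ofReal_mul hC3
                · exact ENNReal.ofReal_mul hC4
        calc (∫⁻ x in Iic (1-c2) ∩ Ioo (1-ε) 1, H x ∂volume)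
            ≤ ∫⁻ x in Iic (1-c2) ∩ Ioo (1-ε) 1,
                (ENNReal.ofReal (M*2^α*(n:ℝ)) * ENNReal.ofReal ((1-x)^(β-α))
                  + ENNReal.ofReal (M*2^α) * ENNReal.ofReal ((1-x)^(β-α-1))) ∂volume :=
              setLIntegral_mono (by fun_prop) hptw
          _ ≤ ∫⁻ x in Ioc (1-ε) (1-c2),
                (ENNReal.ofReal (M*2^α*(n:ℝ)) * ENNReal.ofReal ((1-x)^(β-α))
                  + ENNReal.ofReal (M*2^α) * ENNReal.ofReal ((1-x)^(β-α-1))) ∂volume := by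
              apply lintegral_mono_set
              rintro x ⟨hxa, hxb, _⟩
              simp only [mem_Iic] at hxa
              exact ⟨hxb, hxa⟩
          _ = ENNReal.ofReal (M*2^α*(n:ℝ)) * ∫⁻ x in Ioc (1-ε) (1-c2),
                ENNReal.ofReal ((1-x)^(β-α)) ∂volume
              + ENNReal.ofReal (M*2^α) * ∫⁻ x in Ioc (1-ε) (1-c2),
                ENNReal.ofReal ((1-x)^(β-α-1)) ∂volume := by
              rw [lintegral_add_left (by fun_prop),
                lintegral_const_mul' _ _ ENNReal.ofReal_ne_top,
                lintegral_const_mul' _ _ ENNReal.ofReal_ne_top]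
          _ ≤ _ := add_le_add
              (mul_le_mul_right (stmt16_J2 (by linarith : β - α < -1) hc2pos (1-ε)
                (by linarith)) _)
              (mul_le_mul_right (stmt16_J2 (by linarith : β - α - 1 < -1) hc2pos (1-ε)
                (by linarith)) _)
      refine (add_le_add hreg1 hreg2).trans ?_
      -- collapse everything into one ofReal and do the real arithmetic
      have hD1 : (0:ℝ) ≤ c2^(β+1)/(β+1) := div_nonneg (Real.rpow_nonneg hc2pos.le _) hd1.le
      have hD2 : (0:ℝ) ≤ c2^((β-1)+1)/((β-1)+1) :=
        div_nonneg (Real.rpow_nonneg hc2pos.le _) (by linarith)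
      have hD3 : (0:ℝ) ≤ c2^((β-α)+1)/(-((β-α)+1)) :=
        div_nonneg (Real.rpow_nonneg hc2pos.le _) (by linarith)
      have hD4 : (0:ℝ) ≤ c2^((β-α-1)+1)/(-((β-α-1)+1)) :=
        div_nonneg (Real.rpow_nonneg hc2pos.le _) (by linarith)
      rw [← ENNReal.ofReal_mul hC1, ← ENNReal.ofReal_mul hC2,
        ← ENNReal.ofReal_mul hC3, ← ENNReal.ofReal_mul hC4,
        ← ENNReal.ofReal_add (mul_nonneg hC1 hD1) (mul_nonneg hC2 hD2),
        ← ENNReal.ofReal_add (mul_nonneg hC3 hD3) (mul_nonneg hC4 hD4),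
        ← ENNReal.ofReal_add (add_nonneg (mul_nonneg hC1 hD1) (mul_nonneg hC2 hD2))
          (add_nonneg (mul_nonneg hC3 hD3) (mul_nonneg hC4 hD4))]
      apply ENNReal.ofReal_le_ofReal
      -- the real computation
      have hh : ∀ w r : ℝ, (n:ℝ)^w * (2/(n:ℝ))^r = 2^r * (n:ℝ)^(w-r) := by
        intro w r
        rw [Real.div_rpow (by norm_num) hnpos.le, Real.rpow_sub hnpos]
        ring
      have e1 : (n:ℝ)^α*(n:ℝ)*c2^(β+1) = 2^(β+1)*(n:ℝ)^(α-β) := by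
        have h1 : (n:ℝ)^α*(n:ℝ) = (n:ℝ)^(α+1) := (Real.rpow_add_one hnpos.ne' α).symm
        rw [h1, hc2def, hh (α+1) (β+1), show α+1-(β+1) = α-β by ring]
      have e2 : (n:ℝ)^α*c2^β = 2^β*(n:ℝ)^(α-β) := by
        rw [hc2def, hh α β]
      have e3 : (n:ℝ)*c2^(β-α+1) = 2^(β-α+1)*(n:ℝ)^(α-β) := by
        have h1 : (n:ℝ)*c2^(β-α+1) = (n:ℝ)^(1:ℝ)*c2^(β-α+1) := by rw [Real.rpow_one]
        rw [h1, hc2def, hh 1 (β-α+1), show (1:ℝ)-(β-α+1) = α-β by ring]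
      have e4 : c2^(β-α) = 2^(β-α)*(n:ℝ)^(α-β) := by
        have h1 : c2^(β-α) = (n:ℝ)^(0:ℝ)*c2^(β-α) := by rw [Real.rpow_zero, one_mul]
        rw [h1, hc2def, hh 0 (β-α), show (0:ℝ)-(β-α) = α-β by ring]
      rw [show (β-1)+1 = β by ring, show (β-α)+1 = β-α+1 by ring,
        show (β-α-1)+1 = β-α by ring, hKBdef]
      have hne1 : β + 1 ≠ 0 := by linarith
      have hne2 : β ≠ 0 := by linarith
      have hne3 : -(β-α+1) = α-1-β := by ring
      have hne4 : -(β-α) = α-β := by ring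
      rw [hne3, hne4]
      have f1 : (2:ℝ)^α * 2^(β-α+1) = 2^(β+1) := by
        rw [← Real.rpow_add (by norm_num : (0:ℝ) < 2)]; congr 1; ring
      have f2 : (2:ℝ)^α * 2^(β-α) = 2^β := by
        rw [← Real.rpow_add (by norm_num : (0:ℝ) < 2)]; congr 1; ring
      apply le_of_eq
      linear_combination (M/(β+1)) * e1 + (M/β) * e2
        + (M*2^α/(α-1-β)) * e3 + (M*2^α/(α-β)) * e4
        + (M/(α-1-β))*(n:ℝ)^(α-β) * f1 + (M/(α-β))*(n:ℝ)^(α-β) * f2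
    calc (∫⁻ x in Iic (1-ε), ENNReal.ofReal (F x) ∂(Measure.map a μ))
          + ∫⁻ x in Ioi (1-ε), ENNReal.ofReal (F x) ∂(Measure.map a μ)
        ≤ ENNReal.ofReal (KA * (n:ℝ)^(α-β)) + ENNReal.ofReal (KB * (n:ℝ)^(α-β)) :=
          add_le_add hA hB
      _ = ENNReal.ofReal ((KA + KB) * (n:ℝ)^(α-β)) := by
          rw [← ENNReal.ofReal_add (mul_nonneg hKA0 hpow0) (mul_nonneg hKB0 hpow0)]
          ring_nf
  -- conclude
  apply tsum_le_of_sum_le' (mul_nonneg (add_nonneg hKA0 hKB0) hpow0)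
  intro S
  calc ∑ s ∈ S, ∫ ω, |∑ t ∈ Finset.Icc (max 1 s.1) (n:ℤ), (a ω) ^ (t - s.1).toNat| ^ α ∂μ
      = ∫ ω, ∑ s ∈ S,
          |∑ t ∈ Finset.Icc (max 1 s.1) (n:ℤ), (a ω) ^ (t - s.1).toNat| ^ α ∂μ :=
        (integral_finset_sum S (fun s _ => hgs_int s)).symm
    _ ≤ ∫ ω, F (a ω) ∂μ := by
        apply integral_mono_ae (integrable_finset_sum S (fun s _ => hgs_int s)) hFint
        filter_upwards [hae] with ω hω
        exact stmt16_key n hn α hα0 (a ω) hω.1 hω.2 S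
    _ = (∫⁻ ω, ENNReal.ofReal (F (a ω)) ∂μ).toReal := by
        apply integral_eq_lintegral_of_nonneg_ae
        · filter_upwards [hae] with ω hω; exact hFnn _ hω.2
        · exact (hFmeas.comp hameas).aestronglyMeasurable
    _ ≤ (KA + KB) * (n:ℝ)^(α-β) := by
        have h := ENNReal.toReal_mono ENNReal.ofReal_ne_top hmain
        rwa [ENNReal.toReal_ofReal (mul_nonneg (add_nonneg hKA0 hKB0) hpow0)] at h
end
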